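/- arXiv:1010.2686 — 4 statements merged into one kernel-verified Lean document; each statement's English description precedes it below -/
import Mathlib

section
/- Let p ≥ 1, let B and C be p×p complex matrices with C invertible, set A = B (C C†) B†, let s = rank B with s ≥ 1, and let μ denote the smallest nonzero eigenvalue of B B†. Then for every k with 1 ≤ k ≤ s, the k-th smallest nonzero eigenvalue of A satisfies λ_{p−s+k}(A) ≥ μ · λ_k(C C†), where for an n×n Hermitian matrix M, λ_1(M) ≤ ⋯ ≤ λ_n(M) denote its eigenvalues in ascending order (so λ_{p−s+k}(A), k = 1,…,s, are exactly the nonzero eigenvalues of A). -/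
open Matrix
open scoped ComplexOrder
open scoped InnerProductSpace

open Classical in
/-- The eigenvalues of a Hermitian complex matrix, sorted in ascending order,
`eigAsc M k` being the `(k+1)`-th smallest eigenvalue (so `eigAsc M (k-1)` is `λ_k`
in the 1-based indexing `λ_1 ≤ λ_2 ≤ ⋯`). Junk value `0` if `M` is not Hermitian
or `k` is out of range. -/
noncomputable def eigAsc {n : Type*} [Fintype n] [DecidableEq n]
    (M : Matrix n n ℂ) (k : ℕ) : ℝ :=
  if hM : M.IsHermitian then
    ((Finset.univ.val.map hM.eigenvalues).sort (· ≤ ·)).getD k 0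
  else 0

variable {p : ℕ} {M : Matrix (Fin p) (Fin p) ℂ}

lemma sortedList_eq (hM : M.IsHermitian) :
    ((Finset.univ.val.map hM.eigenvalues).sort (· ≤ ·))
      = List.ofFn (hM.eigenvalues ∘ Tuple.sort hM.eigenvalues) := by
  refine List.Perm.eq_of_pairwise' (r := (· ≤ ·)) (l₂ := List.ofFn _) ?_ ?_ ?_
  rotate_right
  · refine Multiset.coe_eq_coe.mp ?_
    rw [Multiset.sort_eq]
    have h1 : (List.ofFn (hM.eigenvalues ∘ ⇑(Tuple.sort hM.eigenvalues)) : Multiset ℝ)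
        = Multiset.map hM.eigenvalues (Multiset.map (Tuple.sort hM.eigenvalues) Finset.univ.val) := by
      rw [Multiset.map_map]
      rw [List.ofFn_eq_map]
      rfl
    rw [h1]
    symm
    congr 1
    have := Finset.map_univ_equiv (Tuple.sort hM.eigenvalues)
    calc Multiset.map (⇑(Tuple.sort hM.eigenvalues)) Finset.univ.val
        = (Finset.univ.map (Tuple.sort hM.eigenvalues).toEmbedding).val := rfl
      _ = Finset.univ.val := by rw [this]
  · exact Multiset.pairwise_sort _ _
  · exact ((List.sortedLE_ofFn_iff).mpr (Tuple.monotone_sort _)).pairwise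

lemma eigAsc_apply (hM : M.IsHermitian) (j : ℕ) (hj : j < p) :
    eigAsc M j = hM.eigenvalues (Tuple.sort hM.eigenvalues ⟨j, hj⟩) := by
  rw [eigAsc, dif_pos hM, sortedList_eq hM]
  have hl : j < (List.ofFn (hM.eigenvalues ∘ ⇑(Tuple.sort hM.eigenvalues))).length := by
    rw [List.length_ofFn]; exact hj
  rw [List.getD_eq_getElem _ _ hl, List.getElem_ofFn]
  rfl
variable {p : ℕ} {M : Matrix (Fin p) (Fin p) ℂ}

lemma quad_eq_sum (hM : M.IsHermitian) (x : EuclideanSpace ℂ (Fin p)) :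
    star (x : Fin p → ℂ) ⬝ᵥ (M *ᵥ x)
      = ∑ j, (hM.eigenvalues j : ℂ) * ((‖hM.eigenvectorBasis.repr x j‖ : ℂ))^2 := by
  set v := hM.eigenvectorBasis with hv
  set d := fun j => hM.eigenvectorBasis.repr x j with hd
  have hx : x = ∑ j, d j • v j := (v.sum_repr x).symm
  have hMx : (WithLp.toLp 2 (M *ᵥ x : Fin p → ℂ) : EuclideanSpace ℂ (Fin p))
      = ∑ j, d j • ((hM.eigenvalues j : ℂ) • v j) := by
    calc (WithLp.toLp 2 (M *ᵥ x : Fin p → ℂ) : EuclideanSpace ℂ (Fin p))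
        = WithLp.toLp 2 (M.mulVecLin (∑ j, d j • (v j : EuclideanSpace ℂ (Fin p)))) := by
          simp_rw [← WithLp.ofLp_smul, ← WithLp.ofLp_sum, ← hx]; rfl
      _ = ∑ j, d j • WithLp.toLp 2 (M.mulVecLin (v j : EuclideanSpace ℂ (Fin p))) := by
          rw [map_sum, WithLp.toLp_sum]
          simp_rw [_root_.map_smul, WithLp.toLp_smul]
      _ = _ := by
          refine Finset.sum_congr rfl fun j _ => ?_
          congr 1
          rw [Matrix.mulVecLin_apply, hM.mulVec_eigenvectorBasis j, RCLike.real_smul_eq_coe_smul (K := ℂ)]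
          rfl
  have key : star (x : Fin p → ℂ) ⬝ᵥ (M *ᵥ x)
      = ⟪x, (WithLp.toLp 2 (M *ᵥ x : Fin p → ℂ) : EuclideanSpace ℂ (Fin p))⟫_ℂ := by
    rw [EuclideanSpace.inner_eq_star_dotProduct, dotProduct_comm]
  rw [key, hMx, inner_sum]
  refine Finset.sum_congr rfl fun j _ => ?_
  rw [inner_smul_right, inner_smul_right]
  have h1 : ⟪x, v j⟫_ℂ = starRingEnd ℂ (d j) := by
    rw [← inner_conj_symm, ← v.repr_apply_apply]
  rw [h1]
  have h2 : d j * ((hM.eigenvalues j : ℂ) * starRingEnd ℂ (d j))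
      = (hM.eigenvalues j : ℂ) * (d j * starRingEnd ℂ (d j)) := by ring
  rw [h2, RCLike.mul_conj]
  push_cast
  rfl

noncomputable def eigSpan (hM : M.IsHermitian) (S : Finset (Fin p)) :
    Submodule ℂ (EuclideanSpace ℂ (Fin p)) :=
  Submodule.span ℂ (hM.eigenvectorBasis '' ↑S)

lemma finrank_eigSpan (hM : M.IsHermitian) (S : Finset (Fin p)) :
    Module.finrank ℂ (eigSpan hM S) = S.card := by
  have hli : LinearIndependent ℂ (hM.eigenvectorBasis ∘ (Subtype.val : S → Fin p)) :=
    hM.eigenvectorBasis.orthonormal.linearIndependent.comp _ Subtype.val_injective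
  have hr : Set.range (hM.eigenvectorBasis ∘ (Subtype.val : S → Fin p))
      = hM.eigenvectorBasis '' ↑S := by
    rw [Set.range_comp, Subtype.range_coe]
  rw [eigSpan, ← hr, finrank_span_eq_card hli, Fintype.card_coe]

lemma repr_eq_zero_of_mem (hM : M.IsHermitian) {S : Finset (Fin p)}
    {x : EuclideanSpace ℂ (Fin p)} (hx : x ∈ eigSpan hM S) {j : Fin p} (hj : j ∉ S) :
    hM.eigenvectorBasis.repr x j = 0 := by
  rw [hM.eigenvectorBasis.repr_apply_apply]
  have : eigSpan hM S ≤ LinearMap.ker (innerSL ℂ (hM.eigenvectorBasis j)).toLinearMap := by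
    rw [eigSpan, Submodule.span_le]
    rintro y ⟨i, hi, rfl⟩
    have hij : j ≠ i := fun h => hj (h ▸ hi)
    simpa using hM.eigenvectorBasis.orthonormal.2 hij
  simpa using this hx

lemma quad_re_eq_sum (hM : M.IsHermitian) (x : EuclideanSpace ℂ (Fin p)) :
    (star (x : Fin p → ℂ) ⬝ᵥ (M *ᵥ x)).re
      = ∑ j, hM.eigenvalues j * ‖hM.eigenvectorBasis.repr x j‖^2 := by
  have h : ∑ j, (hM.eigenvalues j : ℂ) * ((‖hM.eigenvectorBasis.repr x j‖ : ℂ))^2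
      = ((∑ j, hM.eigenvalues j * ‖hM.eigenvectorBasis.repr x j‖^2 : ℝ) : ℂ) := by
    push_cast; rfl
  rw [quad_eq_sum hM, h, Complex.ofReal_re]

lemma norm_sq_eq_sum_repr (hM : M.IsHermitian) (x : EuclideanSpace ℂ (Fin p)) :
    ‖x‖^2 = ∑ j, ‖hM.eigenvectorBasis.repr x j‖^2 := by
  rw [← hM.eigenvectorBasis.repr.norm_map x, EuclideanSpace.norm_eq, Real.sq_sqrt]
  positivity

lemma quad_ge_on_span (hM : M.IsHermitian) {S : Finset (Fin p)} {c : ℝ}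
    (hS : ∀ i ∈ S, c ≤ hM.eigenvalues i) {x : EuclideanSpace ℂ (Fin p)}
    (hx : x ∈ eigSpan hM S) :
    c * ‖x‖^2 ≤ (star (x : Fin p → ℂ) ⬝ᵥ (M *ᵥ x)).re := by
  rw [quad_re_eq_sum hM, norm_sq_eq_sum_repr hM]
  have h0 : ∀ j ∈ Finset.univ, j ∉ S → hM.eigenvalues j * ‖hM.eigenvectorBasis.repr x j‖^2 = 0 :=
    fun j _ hj => by rw [repr_eq_zero_of_mem hM hx hj]; simp
  have h0' : ∀ j ∈ Finset.univ, j ∉ S → ‖hM.eigenvectorBasis.repr x j‖^2 = 0 :=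
    fun j _ hj => by rw [repr_eq_zero_of_mem hM hx hj]; simp
  rw [← Finset.sum_subset S.subset_univ h0, ← Finset.sum_subset S.subset_univ h0',
    Finset.mul_sum]
  exact Finset.sum_le_sum fun i hi =>
    mul_le_mul_of_nonneg_right (hS i hi) (by positivity)

lemma quad_le_on_span (hM : M.IsHermitian) {S : Finset (Fin p)} {c : ℝ}
    (hS : ∀ i ∈ S, hM.eigenvalues i ≤ c) {x : EuclideanSpace ℂ (Fin p)}
    (hx : x ∈ eigSpan hM S) :
    (star (x : Fin p → ℂ) ⬝ᵥ (M *ᵥ x)).re ≤ c * ‖x‖^2 := by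
  rw [quad_re_eq_sum hM, norm_sq_eq_sum_repr hM]
  have h0 : ∀ j ∈ Finset.univ, j ∉ S → hM.eigenvalues j * ‖hM.eigenvectorBasis.repr x j‖^2 = 0 :=
    fun j _ hj => by rw [repr_eq_zero_of_mem hM hx hj]; simp
  have h0' : ∀ j ∈ Finset.univ, j ∉ S → ‖hM.eigenvectorBasis.repr x j‖^2 = 0 :=
    fun j _ hj => by rw [repr_eq_zero_of_mem hM hx hj]; simp
  rw [← Finset.sum_subset S.subset_univ h0, ← Finset.sum_subset S.subset_univ h0',
    Finset.mul_sum]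
  exact Finset.sum_le_sum fun i hi =>
    mul_le_mul_of_nonneg_right (hS i hi) (by positivity)

lemma le_eigAsc_of_subspace (hM : M.IsHermitian) {j : ℕ} (hj : j < p) {c : ℝ}
    (V : Submodule ℂ (EuclideanSpace ℂ (Fin p))) (hdim : p - j ≤ Module.finrank ℂ V)
    (hV : ∀ x ∈ V, c * ‖x‖^2 ≤ (star (x : Fin p → ℂ) ⬝ᵥ (M *ᵥ x)).re) :
    c ≤ eigAsc M j := by
  set τ := Tuple.sort hM.eigenvalues with hτ
  set S := (Finset.Iic (⟨j, hj⟩ : Fin p)).image τ with hSdef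
  have hcard : S.card = j + 1 := by
    rw [hSdef, Finset.card_image_of_injective _ τ.injective, Fin.card_Iic]
  set U := eigSpan hM S with hU
  have hrU : Module.finrank ℂ U = j + 1 := by rw [hU, finrank_eigSpan, hcard]
  have hne : U ⊓ V ≠ ⊥ := by
    intro hbot
    have h1 := Submodule.finrank_sup_add_finrank_inf_eq U V
    rw [hbot, finrank_bot, add_zero] at h1
    have h2 : Module.finrank ℂ ↥(U ⊔ V) ≤ p := by
      have := Submodule.finrank_le (U ⊔ V)
      rwa [finrank_euclideanSpace_fin] at this
    omega
  obtain ⟨x, hxUV, hx0⟩ := (Submodule.ne_bot_iff _).mp hne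
  have hSle : ∀ i ∈ S, hM.eigenvalues i ≤ eigAsc M j := by
    intro i hi
    rw [hSdef, Finset.mem_image] at hi
    obtain ⟨i', hi', rfl⟩ := hi
    rw [eigAsc_apply hM j hj]
    exact Tuple.monotone_sort hM.eigenvalues (Finset.mem_Iic.mp hi')
  have h1 := quad_le_on_span hM hSle hxUV.1
  have h2 := hV x hxUV.2
  have hx2 : 0 < ‖x‖^2 := pow_pos (norm_pos_iff.mpr hx0) 2
  exact le_of_mul_le_mul_right (h2.trans h1) hx2

lemma exists_top_span (hM : M.IsHermitian) {j : ℕ} (hj : j < p) :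
    ∃ W : Submodule ℂ (EuclideanSpace ℂ (Fin p)), Module.finrank ℂ W = p - j ∧
      ∀ x ∈ W, (eigAsc M j) * ‖x‖^2 ≤ (star (x : Fin p → ℂ) ⬝ᵥ (M *ᵥ x)).re := by
  set τ := Tuple.sort hM.eigenvalues with hτ
  set S := (Finset.Ici (⟨j, hj⟩ : Fin p)).image τ with hSdef
  refine ⟨eigSpan hM S, ?_, ?_⟩
  · rw [finrank_eigSpan, hSdef, Finset.card_image_of_injective _ τ.injective, Fin.card_Ici]
  · intro x hx
    refine quad_ge_on_span hM ?_ hx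
    intro i hi
    rw [hSdef, Finset.mem_image] at hi
    obtain ⟨i', hi', rfl⟩ := hi
    rw [eigAsc_apply hM j hj]
    exact Tuple.monotone_sort hM.eigenvalues (Finset.mem_Ici.mp hi')

lemma eigAsc_pos_of_rank (hM : M.IsHermitian) (hpsd : M.PosSemidef) {s : ℕ}
    (hrank : M.rank = s) (hs1 : 1 ≤ s) (hsp : s ≤ p) : 0 < eigAsc M (p - s) := by
  have hj : p - s < p := by omega
  set τ := Tuple.sort hM.eigenvalues with hτ
  rw [eigAsc_apply hM (p - s) hj]
  rcases lt_or_ge 0 (hM.eigenvalues (τ ⟨p - s, hj⟩)) with h | h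
  · exact h
  have hzero : hM.eigenvalues (τ ⟨p - s, hj⟩) = 0 :=
    le_antisymm h (hpsd.eigenvalues_nonneg _)
  exfalso
  have hmono := Tuple.monotone_sort hM.eigenvalues
  have himp : ∀ i : Fin p, hM.eigenvalues (τ i) ≠ 0 → (⟨p - s, hj⟩ : Fin p) < i := by
    intro i hi
    by_contra hlt
    push_neg at hlt
    exact hi (le_antisymm (hzero ▸ hmono hlt) (hpsd.eigenvalues_nonneg _))
  have hcount : Fintype.card {i : Fin p // hM.eigenvalues (τ i) ≠ 0}
      ≤ Fintype.card {i : Fin p // (⟨p - s, hj⟩ : Fin p) < i} :=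
    Fintype.card_subtype_mono _ _ himp
  have hioi : Fintype.card {i : Fin p // (⟨p - s, hj⟩ : Fin p) < i} = p - 1 - (p - s) := by
    rw [Fintype.card_subtype, Finset.filter_lt_eq_Ioi, Fin.card_Ioi]
  rw [hioi] at hcount
  have hcard : Fintype.card {i : Fin p // hM.eigenvalues (τ i) ≠ 0}
      = Fintype.card {i : Fin p // hM.eigenvalues i ≠ 0} :=
    Fintype.card_congr (τ.subtypeEquiv fun a => Iff.rfl)
  rw [hcard, ← hM.rank_eq_card_non_zero_eigs, hrank] at hcount
  norm_num at hcount
  omega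


/-- Part (b) of the eigenvalue lemma: for `A = B (C Cᴴ) Bᴴ` with `C` invertible and
`s = rank B ≥ 1`, the nonzero eigenvalues `λ_{p-s+k}(A)`, `k = 1, …, s`, are bounded
below by `μ · λ_k(C Cᴴ)`, where `μ = λ_{p-s+1}(B Bᴴ)` is the smallest nonzero
eigenvalue of `B Bᴴ` (eigenvalues in ascending order). -/
theorem stmt1 (p : ℕ) (hp : 1 ≤ p)
    (B C : Matrix (Fin p) (Fin p) ℂ) (hC : IsUnit C)
    (s : ℕ) (hs : B.rank = s) (hs1 : 1 ≤ s)
    (μ : ℝ) (hμ : μ = eigAsc (B * Bᴴ) (p - s))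
    (k : ℕ) (hk1 : 1 ≤ k) (hks : k ≤ s) :
    μ * eigAsc (C * Cᴴ) (k - 1) ≤ eigAsc (B * (C * Cᴴ) * Bᴴ) (p - s + k - 1) := by
  have hBBH : (B * Bᴴ).IsHermitian := Matrix.isHermitian_mul_conjTranspose_self B
  have hCCH : (C * Cᴴ).IsHermitian := Matrix.isHermitian_mul_conjTranspose_self C
  have hApe : B * (C * Cᴴ) * Bᴴ = (B * C) * (B * C)ᴴ := by
    rw [Matrix.conjTranspose_mul]
    noncomm_ring
  have hA : (B * (C * Cᴴ) * Bᴴ).IsHermitian := by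
    rw [hApe]; exact Matrix.isHermitian_mul_conjTranspose_self _
  have hsp : s ≤ p := by
    rw [← hs]
    simpa using B.rank_le_card_width
  have hpsdB : (B * Bᴴ).PosSemidef := Matrix.posSemidef_self_mul_conjTranspose B
  have hpsdC : (C * Cᴴ).PosSemidef := Matrix.posSemidef_self_mul_conjTranspose C
  have hrankB : (B * Bᴴ).rank = s := by rw [Matrix.rank_self_mul_conjTranspose, hs]
  have hμpos : 0 < μ := hμ ▸ eigAsc_pos_of_rank hBBH hpsdB hrankB hs1 hsp
  have hk1p : k - 1 < p := by omega
  set ck := eigAsc (C * Cᴴ) (k - 1) with hck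
  have hck0 : 0 ≤ ck := by
    rw [hck, eigAsc_apply hCCH _ hk1p]
    exact hpsdC.eigenvalues_nonneg _
  have hpsj : p - s < p := by omega
  obtain ⟨E, hEdim, hEq⟩ := exists_top_span hBBH hpsj
  obtain ⟨F, hFdim, hFq⟩ := exists_top_span hCCH hk1p
  -- the linear map x ↦ Bᴴ *ᵥ x on EuclideanSpace
  set L : EuclideanSpace ℂ (Fin p) →ₗ[ℂ] EuclideanSpace ℂ (Fin p) :=
    { toFun := fun x => WithLp.toLp 2 (Bᴴ *ᵥ (x : Fin p → ℂ) : Fin p → ℂ)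
      map_add' := fun x y => congrArg (WithLp.toLp 2) (Matrix.mulVec_add Bᴴ x y)
      map_smul' := fun c x => congrArg (WithLp.toLp 2) (Bᴴ.mulVec_smul c x) } with hL
  have hLx : ∀ x : EuclideanSpace ℂ (Fin p), (L x : Fin p → ℂ) = Bᴴ *ᵥ (x : Fin p → ℂ) :=
    fun x => rfl
  -- quadratic form of B*Bᴴ is the squared norm of L x
  have hBq : ∀ x : EuclideanSpace ℂ (Fin p),
      (star (x : Fin p → ℂ) ⬝ᵥ ((B * Bᴴ) *ᵥ x)).re = ‖L x‖^2 := by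
    intro x
    have h1 : star (x : Fin p → ℂ) ⬝ᵥ ((B * Bᴴ) *ᵥ x)
        = star ((L x : Fin p → ℂ)) ⬝ᵥ (L x : Fin p → ℂ) := by
      rw [hLx, ← Matrix.mulVec_mulVec, Matrix.dotProduct_mulVec]
      congr 1
      rw [Matrix.star_mulVec, Matrix.conjTranspose_conjTranspose]
    have h2 : star ((L x : Fin p → ℂ)) ⬝ᵥ (L x : Fin p → ℂ) = ((‖L x‖ : ℂ))^2 := by
      rw [show star ((L x : Fin p → ℂ)) ⬝ᵥ (L x : Fin p → ℂ) = ⟪L x, L x⟫_ℂ from by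
          rw [EuclideanSpace.inner_eq_star_dotProduct, dotProduct_comm],
        inner_self_eq_norm_sq_to_K]
      norm_cast
    rw [h1, h2]
    norm_cast
  -- quadratic form of A in terms of C*Cᴴ at L x
  have hAq : ∀ x : EuclideanSpace ℂ (Fin p),
      star (x : Fin p → ℂ) ⬝ᵥ ((B * (C * Cᴴ) * Bᴴ) *ᵥ x)
        = star ((L x : Fin p → ℂ)) ⬝ᵥ ((C * Cᴴ) *ᵥ (L x : Fin p → ℂ)) := by
    intro x
    rw [hLx, ← Matrix.mulVec_mulVec, ← Matrix.mulVec_mulVec, Matrix.dotProduct_mulVec]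
    congr 1
    rw [Matrix.star_mulVec, Matrix.conjTranspose_conjTranspose]
  -- L is injective on E
  have hEbound : ∀ x ∈ E, μ * ‖x‖^2 ≤ ‖L x‖^2 := by
    intro x hx
    rw [← hBq x, hμ]
    exact hEq x hx
  have hkerE : ∀ x ∈ E, L x = 0 → x = 0 := by
    intro x hx h0
    have := hEbound x hx
    rw [h0, norm_zero] at this
    have hx2 : ‖x‖^2 ≤ 0 := by nlinarith
    have : ‖x‖ = 0 := by nlinarith [norm_nonneg x, sq_nonneg (‖x‖)]
    exact norm_eq_zero.mp this
  have hmapE : Module.finrank ℂ (Submodule.map L E) = s := by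
    have hker : LinearMap.ker (L.domRestrict E) = ⊥ := by
      rw [LinearMap.ker_eq_bot']
      intro m hm
      have := hkerE m.1 m.2 hm
      exact Subtype.ext this
    have h1 := LinearMap.finrank_range_add_finrank_ker (L.domRestrict E)
    rw [hker, finrank_bot, add_zero, LinearMap.range_domRestrict] at h1
    rw [h1, hEdim]
    omega
  set V := E ⊓ Submodule.comap L F with hV
  have hmapV : Submodule.map L V = Submodule.map L E ⊓ F := by
    refine le_antisymm ?_ ?_
    · rintro y hy
      obtain ⟨x, hxV, rfl⟩ := hy
      exact ⟨⟨x, hxV.1, rfl⟩, hxV.2⟩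
    · rintro y ⟨⟨x, hxE, rfl⟩, hyF⟩
      exact ⟨x, ⟨hxE, hyF⟩, rfl⟩
  have hdimV : p - (p - s + k - 1) ≤ Module.finrank ℂ V := by
    have h1 : Module.finrank ℂ (Submodule.map L V) ≤ Module.finrank ℂ V :=
      Submodule.finrank_map_le L V
    have h2 := Submodule.finrank_sup_add_finrank_inf_eq (Submodule.map L E) F
    have h3 : Module.finrank ℂ ↥(Submodule.map L E ⊔ F) ≤ p := by
      have := Submodule.finrank_le (Submodule.map L E ⊔ F)
      rwa [finrank_euclideanSpace_fin] at this
    rw [hmapV] at h1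
    rw [hmapE] at h2
    omega
  have hVq : ∀ x ∈ V, (μ * ck) * ‖x‖^2
      ≤ (star (x : Fin p → ℂ) ⬝ᵥ ((B * (C * Cᴴ) * Bᴴ) *ᵥ x)).re := by
    intro x hx
    have hxE : x ∈ E := hx.1
    have hxF : L x ∈ F := hx.2
    have h1 : ck * ‖L x‖^2 ≤ (star ((L x : Fin p → ℂ)) ⬝ᵥ ((C * Cᴴ) *ᵥ (L x : Fin p → ℂ))).re :=
      hFq (L x) hxF
    have h2 : μ * ‖x‖^2 ≤ ‖L x‖^2 := hEbound x hxE
    have h3 : ck * (μ * ‖x‖^2) ≤ ck * ‖L x‖^2 := mul_le_mul_of_nonneg_left h2 hck0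
    rw [hAq x]
    nlinarith
  have hjp : p - s + k - 1 < p := by omega
  have := le_eigAsc_of_subspace hA hjp V hdimV hVq
  exact this
end

section
/- (Ostrowski-type inequality for positive semidefinite matrices.) Let S be an invertible p×p complex matrix and Ω a positive semidefinite Hermitian p×p complex matrix. Then for every k with 1 ≤ k ≤ p, λ_k(S Ω S†) ≥ λ_1(S S†) · λ_k(Ω). -/
open Matrix
open scoped ComplexOrder

lemma eigAsc_eq {p : ℕ} {M : Matrix (Fin p) (Fin p) ℂ} (hM : M.IsHermitian) (j : Fin p) :
    eigAsc M j = hM.eigenvalues (Tuple.sort hM.eigenvalues j) := by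
  classical
  set f := hM.eigenvalues
  set σ := Tuple.sort f
  have h1 : (Finset.univ.val.map f).sort (· ≤ ·) = List.ofFn (f ∘ σ) := by
    refine List.Perm.eq_of_pairwise' (Multiset.pairwise_sort _ _)
      (List.sortedLE_ofFn_iff.mpr (Tuple.monotone_sort f)).pairwise ?_
    · rw [← Multiset.coe_eq_coe, Multiset.sort_eq, Fin.univ_val_map, ← Fin.univ_val_map,
        ← Fin.univ_val_map (f ∘ σ)]
      rw [show Finset.univ.val.map (f ∘ σ) = (Finset.univ.val.map σ).map f by
        rw [Multiset.map_map]]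
      congr 1
      have : Finset.univ.map σ.toEmbedding = Finset.univ := Finset.map_univ_equiv σ
      simpa using congrArg Finset.val this
  rw [eigAsc, dif_pos hM, h1]
  rw [List.getD_eq_getElem _ _ (by simp [j.isLt])]
  simp

lemma quadform_eq {p : ℕ} {M : Matrix (Fin p) (Fin p) ℂ} (hM : M.IsHermitian) (x : Fin p → ℂ) :
    star x ⬝ᵥ (M *ᵥ x) =
      ∑ i, (hM.eigenvalues i : ℂ) *
        Complex.normSq ((star (hM.eigenvectorUnitary : Matrix (Fin p) (Fin p) ℂ) *ᵥ x) i) := by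
  set U := (hM.eigenvectorUnitary : Matrix (Fin p) (Fin p) ℂ) with hU
  set y := star U *ᵥ x with hy
  have hstar : star y = star x ᵥ* U := by
    rw [hy, star_mulVec]
    congr 1
    rw [star_eq_conjTranspose, conjTranspose_conjTranspose]
  calc star x ⬝ᵥ (M *ᵥ x)
      = star x ⬝ᵥ ((U * (diagonal (RCLike.ofReal ∘ hM.eigenvalues) * star U)) *ᵥ x) := by
        rw [← mul_assoc]
        conv_lhs => rw [hM.spectral_theorem, Unitary.conjStarAlgAut_apply]
    _ = star y ⬝ᵥ (diagonal (RCLike.ofReal ∘ hM.eigenvalues) *ᵥ y) := by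
        rw [← mulVec_mulVec, dotProduct_mulVec, ← hstar, mulVec_mulVec]
    _ = ∑ i, (hM.eigenvalues i : ℂ) * Complex.normSq (y i) := by
        simp only [dotProduct, mulVec_diagonal, Function.comp_apply, Pi.star_apply]
        refine Finset.sum_congr rfl fun i _ => ?_
        rw [Complex.normSq_eq_conj_mul_self]
        simp only [Complex.star_def]
        rw [mul_left_comm]
        norm_num [RCLike.ofReal_alg]

lemma normsum_eq {p : ℕ} {M : Matrix (Fin p) (Fin p) ℂ} (hM : M.IsHermitian) (x : Fin p → ℂ) :
    star x ⬝ᵥ x =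
      ∑ i, (Complex.normSq ((star (hM.eigenvectorUnitary : Matrix (Fin p) (Fin p) ℂ) *ᵥ x) i) : ℂ) := by
  set U := (hM.eigenvectorUnitary : Matrix (Fin p) (Fin p) ℂ) with hU
  set y := star U *ᵥ x with hy
  have hstar : star y = star x ᵥ* U := by
    rw [hy, star_mulVec]
    congr 1
    rw [star_eq_conjTranspose, conjTranspose_conjTranspose]
  have h1 : star y ⬝ᵥ y = star x ⬝ᵥ x := by
    rw [hstar, ← dotProduct_mulVec, hy, mulVec_mulVec,
      (mem_unitaryGroup_iff).mp hM.eigenvectorUnitary.2, one_mulVec]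
  rw [← h1]
  simp only [dotProduct, Pi.star_apply]
  refine Finset.sum_congr rfl fun i _ => ?_
  rw [Complex.normSq_eq_conj_mul_self]
  simp [Complex.star_def]

lemma quadform_re {p : ℕ} {M : Matrix (Fin p) (Fin p) ℂ} (hM : M.IsHermitian) (x : Fin p → ℂ) :
    (star x ⬝ᵥ (M *ᵥ x)).re =
      ∑ i, hM.eigenvalues i *
        Complex.normSq ((star (hM.eigenvectorUnitary : Matrix (Fin p) (Fin p) ℂ) *ᵥ x) i) := by
  rw [quadform_eq hM x, Complex.re_sum]
  refine Finset.sum_congr rfl fun i _ => ?_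
  rw [show ((hM.eigenvalues i : ℂ)) = Complex.ofReal (hM.eigenvalues i) from rfl,
    ← Complex.ofReal_mul, Complex.ofReal_re]

lemma normsum_re {p : ℕ} {M : Matrix (Fin p) (Fin p) ℂ} (hM : M.IsHermitian) (x : Fin p → ℂ) :
    (star x ⬝ᵥ x).re =
      ∑ i, Complex.normSq ((star (hM.eigenvectorUnitary : Matrix (Fin p) (Fin p) ℂ) *ᵥ x) i) := by
  rw [normsum_eq hM x, Complex.re_sum]
  simp

lemma exists_lower {p k : ℕ} {M : Matrix (Fin p) (Fin p) ℂ} (hM : M.IsHermitian) (hk : k < p)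
    (V : Submodule ℂ (Fin p → ℂ)) (hV : k + 1 ≤ Module.finrank ℂ V) :
    ∃ x ∈ V, x ≠ 0 ∧ eigAsc M k * (star x ⬝ᵥ x).re ≤ (star x ⬝ᵥ (M *ᵥ x)).re := by
  classical
  set f := hM.eigenvalues with hf
  set σ := Tuple.sort f with hσ
  set U := (hM.eigenvectorUnitary : Matrix (Fin p) (Fin p) ℂ) with hU
  let ψ : (Fin p → ℂ) →ₗ[ℂ] (Fin k → ℂ) :=
    LinearMap.pi fun j =>
      (LinearMap.proj (σ (Fin.castLE hk.le j)) : (Fin p → ℂ) →ₗ[ℂ] ℂ).comp (mulVecLin (star U))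
  let φ := ψ.comp V.subtype
  have hker : LinearMap.ker φ ≠ ⊥ := by
    intro hbot
    have hinj : Function.Injective φ := LinearMap.ker_eq_bot.mp hbot
    have h1 : Module.finrank ℂ V ≤ Module.finrank ℂ (Fin k → ℂ) :=
      LinearMap.finrank_le_finrank_of_injective hinj
    simp only [Module.finrank_pi, Fintype.card_fin] at h1
    omega
  obtain ⟨v, hv0⟩ := Submodule.exists_mem_ne_zero_of_ne_bot hker
  obtain ⟨hvker, hvne⟩ := hv0
  refine ⟨v.1, v.2, ?_, ?_⟩
  · exact fun h => hvne (Subtype.ext h)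
  · set x : Fin p → ℂ := v.1 with hx
    set y := star U *ᵥ x with hy
    have hzero : ∀ j : Fin k, y (σ (Fin.castLE hk.le j)) = 0 := by
      intro j
      have := congrFun (LinearMap.mem_ker.mp hvker) j
      simpa [φ, ψ] using this
    rw [quadform_re hM x, normsum_re hM x, ← hU, ← hy]
    rw [← Equiv.sum_comp σ (fun i => f i * Complex.normSq (y i)),
      ← Equiv.sum_comp σ (fun i => Complex.normSq (y i)), Finset.mul_sum]
    refine Finset.sum_le_sum fun i _ => ?_
    rcases lt_or_ge i.val k with hik | hik
    · have : y (σ i) = 0 := by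
        have := hzero ⟨i.val, hik⟩
        simpa [Fin.castLE] using this
      simp [this]
    · have hmono : eigAsc M k ≤ f (σ i) := by
        rw [eigAsc_eq hM ⟨k, hk⟩]
        exact Tuple.monotone_sort f (by exact hik : (⟨k, hk⟩ : Fin p) ≤ i)
      exact mul_le_mul_of_nonneg_right hmono (Complex.normSq_nonneg _)

lemma min_le_form {p : ℕ} {M : Matrix (Fin p) (Fin p) ℂ} (hM : M.IsHermitian) (hp : 0 < p)
    (x : Fin p → ℂ) :
    eigAsc M 0 * (star x ⬝ᵥ x).re ≤ (star x ⬝ᵥ (M *ᵥ x)).re := by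
  set f := hM.eigenvalues with hf
  set σ := Tuple.sort f with hσ
  rw [quadform_re hM x, normsum_re hM x, Finset.mul_sum]
  refine Finset.sum_le_sum fun i _ => ?_
  have hmono : eigAsc M 0 ≤ f i := by
    rw [eigAsc_eq hM ⟨0, hp⟩]
    have := Tuple.monotone_sort f (a := ⟨0, hp⟩) (b := σ.symm i) (by exact Nat.zero_le _)
    simpa [hσ, hf] using this
  exact mul_le_mul_of_nonneg_right hmono (Complex.normSq_nonneg _)

lemma exists_upper {p k : ℕ} {M : Matrix (Fin p) (Fin p) ℂ} (hM : M.IsHermitian) (hk : k < p) :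
    ∃ V : Submodule ℂ (Fin p → ℂ), Module.finrank ℂ V = k + 1 ∧
      ∀ x ∈ V, (star x ⬝ᵥ (M *ᵥ x)).re ≤ eigAsc M k * (star x ⬝ᵥ x).re := by
  classical
  set f := hM.eigenvalues with hf
  set σ := Tuple.sort f with hσ
  set U := (hM.eigenvectorUnitary : Matrix (Fin p) (Fin p) ℂ) with hU
  have hU1 : U * star U = 1 := (mem_unitaryGroup_iff).mp hM.eigenvectorUnitary.2
  have hU1' : star U * U = 1 := (mem_unitaryGroup_iff').mp hM.eigenvectorUnitary.2
  let ι : (Fin (k + 1) → ℂ) →ₗ[ℂ] (Fin p → ℂ) :=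
    LinearMap.pi fun i =>
      if h : (σ.symm i).val < k + 1 then (LinearMap.proj ⟨(σ.symm i).val, h⟩) else 0
  have hι : ∀ (c : Fin (k + 1) → ℂ) (i : Fin p),
      ι c i = if h : (σ.symm i).val < k + 1 then c ⟨(σ.symm i).val, h⟩ else 0 := by
    intro c i
    by_cases h : (σ.symm i).val < k + 1 <;> simp only [ι, LinearMap.pi_apply, h, ↓reduceDIte, LinearMap.zero_apply, LinearMap.proj_apply]
  have hιinj : Function.Injective ι := by
    intro c d hcd
    funext j
    have hjlt : (j : ℕ) < p := lt_of_lt_of_le j.isLt hk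
    have h1 := congrFun hcd (σ ⟨j, hjlt⟩)
    rw [hι, hι] at h1
    simp only [Equiv.symm_apply_apply] at h1
    rw [dif_pos j.isLt, dif_pos j.isLt] at h1
    simpa using h1
  have hUunit : IsUnit U := ⟨Unitary.toUnits hM.eigenvectorUnitary, rfl⟩
  have hUinj : Function.Injective (mulVecLin U) :=
    mulVec_injective_iff_isUnit.mpr hUunit
  refine ⟨(LinearMap.range ι).map (mulVecLin U), ?_, ?_⟩
  · rw [← LinearEquiv.finrank_eq
      ((LinearMap.range ι).equivMapOfInjective _ hUinj)]
    rw [LinearMap.finrank_range_of_inj hιinj]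
    simp
  · rintro x hx
    obtain ⟨w, hw, rfl⟩ := hx
    obtain ⟨c, rfl⟩ := hw
    set x := mulVecLin U (ι c) with hx
    have hxy : star U *ᵥ x = ι c := by
      rw [hx, mulVecLin_apply, mulVec_mulVec, hU1', one_mulVec]
    rw [quadform_re hM x, normsum_re hM x, ← hU, hxy]
    rw [← Equiv.sum_comp σ (fun i => f i * Complex.normSq (ι c i)),
      ← Equiv.sum_comp σ (fun i => Complex.normSq (ι c i)), Finset.mul_sum]
    refine Finset.sum_le_sum fun i _ => ?_
    rcases le_or_gt (k + 1) i.val with hik | hik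
    · have : ι c (σ i) = 0 := by
        rw [hι, dif_neg]
        simp only [Equiv.symm_apply_apply]
        omega
      simp [this]
    · have hmono : f (σ i) ≤ eigAsc M k := by
        rw [eigAsc_eq hM ⟨k, hk⟩]
        exact Tuple.monotone_sort f (a := i) (b := ⟨k, hk⟩) (by exact Nat.lt_succ_iff.mp hik)
      exact mul_le_mul_of_nonneg_right hmono (Complex.normSq_nonneg _)

lemma renorm_eq {p : ℕ} (x : Fin p → ℂ) :
    (star x ⬝ᵥ x).re = ∑ i, Complex.normSq (x i) := by
  rw [show star x ⬝ᵥ x = ∑ i, (Complex.normSq (x i) : ℂ) from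
    Finset.sum_congr rfl fun i _ => by
      rw [Pi.star_apply, Complex.normSq_eq_conj_mul_self]; rfl, Complex.re_sum]
  simp

lemma renorm_pos {p : ℕ} {x : Fin p → ℂ} (hx : x ≠ 0) : 0 < (star x ⬝ᵥ x).re := by
  rw [renorm_eq]
  obtain ⟨i, hi⟩ := Function.ne_iff.mp hx
  exact Finset.sum_pos' (fun j _ => Complex.normSq_nonneg _)
    ⟨i, Finset.mem_univ i, Complex.normSq_pos.mpr hi⟩

/-- Ostrowski-type inequality for positive semidefinite matrices: for `S` invertible
and `Ω` positive semidefinite Hermitian, `λ_k(S Ω Sᴴ) ≥ λ_1(S Sᴴ) · λ_k(Ω)` for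
`1 ≤ k ≤ p` (eigenvalues in ascending order). -/
theorem stmt2 (p : ℕ) (S Ω : Matrix (Fin p) (Fin p) ℂ)
    (hS : IsUnit S) (hΩ : Ω.PosSemidef)
    (k : ℕ) (hk1 : 1 ≤ k) (hkp : k ≤ p) :
    eigAsc (S * Sᴴ) 0 * eigAsc Ω (k - 1) ≤ eigAsc (S * Ω * Sᴴ) (k - 1) := by
  have hp : 0 < p := lt_of_lt_of_le hk1 hkp
  set j := k - 1 with hj
  have hjp : j < p := by omega
  have hA : (S * Ω * Sᴴ).PosSemidef := hΩ.mul_mul_conjTranspose_same S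
  have hSS : (S * Sᴴ).PosSemidef := posSemidef_self_mul_conjTranspose S
  have hΩk0 : 0 ≤ eigAsc Ω j := by
    rw [eigAsc_eq hΩ.1 ⟨j, hjp⟩]; exact hΩ.eigenvalues_nonneg _
  have hc0 : 0 ≤ eigAsc (S * Sᴴ) 0 := by
    rw [show (0 : ℕ) = ((⟨0, hp⟩ : Fin p) : ℕ) from rfl, eigAsc_eq hSS.1 ⟨0, hp⟩]
    exact hSS.eigenvalues_nonneg _
  set c := eigAsc (S * Sᴴ) 0 with hc
  obtain ⟨V, hVrank, hVub⟩ := exists_upper hA.1 hjp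
  have hSH : IsUnit Sᴴ := by
    rw [isUnit_iff_isUnit_det, det_conjTranspose]
    exact (isUnit_iff_isUnit_det S |>.mp hS).star
  have hinj : Function.Injective (mulVecLin Sᴴ) :=
    mulVec_injective_iff_isUnit.mpr hSH
  obtain ⟨y, hyV', hyne, hylb⟩ := exists_lower hΩ.1 hjp (V.map (mulVecLin Sᴴ))
    (by rw [← LinearEquiv.finrank_eq (V.equivMapOfInjective _ hinj), hVrank])
  obtain ⟨x, hxV, rfl⟩ := hyV'
  have hxne : x ≠ 0 := by
    intro h; exact hyne (by simp [h])
  have hstar : star (mulVecLin Sᴴ x) = star x ᵥ* S := by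
    rw [mulVecLin_apply, star_mulVec, conjTranspose_conjTranspose]
  have idA : star (mulVecLin Sᴴ x) ⬝ᵥ (Ω *ᵥ (mulVecLin Sᴴ x)) =
      star x ⬝ᵥ ((S * Ω * Sᴴ) *ᵥ x) := by
    rw [hstar, mulVecLin_apply, ← dotProduct_mulVec, mulVec_mulVec, mulVec_mulVec, mul_assoc]
  have idN : star (mulVecLin Sᴴ x) ⬝ᵥ (mulVecLin Sᴴ x) =
      star x ⬝ᵥ ((S * Sᴴ) *ᵥ x) := by
    rw [hstar, mulVecLin_apply, ← dotProduct_mulVec, mulVec_mulVec]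
  have h2 : (star x ⬝ᵥ ((S * Ω * Sᴴ) *ᵥ x)).re ≤ eigAsc (S * Ω * Sᴴ) j * (star x ⬝ᵥ x).re :=
    hVub x hxV
  have h3 : c * (star x ⬝ᵥ x).re ≤ (star x ⬝ᵥ ((S * Sᴴ) *ᵥ x)).re := min_le_form hSS.1 hp x
  have hn : 0 < (star x ⬝ᵥ x).re := renorm_pos hxne
  have key : (c * eigAsc Ω j) * (star x ⬝ᵥ x).re ≤
      eigAsc (S * Ω * Sᴴ) j * (star x ⬝ᵥ x).re := by
    calc (c * eigAsc Ω j) * (star x ⬝ᵥ x).re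
        = eigAsc Ω j * (c * (star x ⬝ᵥ x).re) := by ring
      _ ≤ eigAsc Ω j * (star x ⬝ᵥ ((S * Sᴴ) *ᵥ x)).re :=
          mul_le_mul_of_nonneg_left h3 hΩk0
      _ = eigAsc Ω j * (star (mulVecLin Sᴴ x) ⬝ᵥ (mulVecLin Sᴴ x)).re := by rw [idN]
      _ ≤ (star (mulVecLin Sᴴ x) ⬝ᵥ (Ω *ᵥ (mulVecLin Sᴴ x))).re := hylb
      _ = (star x ⬝ᵥ ((S * Ω * Sᴴ) *ᵥ x)).re := by rw [idA]
      _ ≤ eigAsc (S * Ω * Sᴴ) j * (star x ⬝ᵥ x).re := h2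
  exact le_of_mul_le_mul_right key hn
end

section
/- Fix N ≥ 1 and let ω = exp(2πi/N). Given matrices H_0, …, H_{N−1} ∈ ℂ^{n_r×n_t}, let C_H be the block circulant matrix whose (j,k)-th n_r×n_t block is H_{(k−j) mod N}, and for 0 ≤ n ≤ N−1 set Δ_n = Σ_{l=0}^{N−1} ω^{nl} H_l. Then for every real c ≥ 0: det(I_{Nn_r} + c · C_H C_H†) = ∏_{n=0}^{N−1} det(I_{n_r} + c · Δ_n Δ_n†). -/
open Matrix Complex

private lemma aux_ite_sum {n : ℕ} (a b : Fin n) (f g : ℂ) :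
    ∑ p : Fin n, (if a = p then f else 0) * (starRingEnd ℂ) (if b = p then g else 0)
      = if a = b then f * (starRingEnd ℂ) g else 0 := by
  by_cases hab : a = b
  · subst hab; simp [apply_ite (starRingEnd ℂ), ite_mul, mul_ite, Finset.sum_ite_eq]
  · simp only [apply_ite (starRingEnd ℂ), map_zero, ite_mul, mul_ite, zero_mul, mul_zero]
    rw [Finset.sum_eq_zero, if_neg hab]
    intro p _
    by_cases h1 : a = p <;> by_cases h2 : b = p <;> simp_all

private lemma aux_dft_unitary {N n : ℕ} (ω : ℂ)
    (hs : ∀ j k : Fin N, ∑ q : Fin N,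
      ω ^ ((j : ℕ) * (q : ℕ)) * (starRingEnd ℂ) (ω ^ ((k : ℕ) * (q : ℕ)))
        = if j = k then (N : ℂ) else 0) :
    (blockDiagonal (fun _ : Fin n => Matrix.of fun j k : Fin N => ω ^ ((j : ℕ) * (k : ℕ)))) *
      (blockDiagonal (fun _ : Fin n => Matrix.of fun j k : Fin N => ω ^ ((j : ℕ) * (k : ℕ))))ᴴ
      = (N : ℂ) • 1 := by
  ext ⟨j, a⟩ ⟨k, b⟩
  rw [Matrix.mul_apply, Fintype.sum_prod_type]
  simp only [conjTranspose_apply, blockDiagonal_apply, Matrix.of_apply]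
  have : ∀ q : Fin N,
      (∑ p : Fin n, (if a = p then ω ^ ((j : ℕ) * (q : ℕ)) else 0) *
        star (if b = p then ω ^ ((k : ℕ) * (q : ℕ)) else 0))
      = if a = b then ω ^ ((j : ℕ) * (q : ℕ)) * (starRingEnd ℂ) (ω ^ ((k : ℕ) * (q : ℕ))) else 0 :=
    fun q => aux_ite_sum a b _ _
  rw [Finset.sum_congr rfl fun q _ => this q]
  by_cases hab : a = b
  · simp only [if_pos hab, hs j k, Matrix.smul_apply, Matrix.one_apply, Prod.mk.injEq, smul_eq_mul]
    by_cases hjk : j = k <;> simp [hjk, hab]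
  · simp only [if_neg hab, Finset.sum_const_zero, Matrix.smul_apply, Matrix.one_apply,
      Prod.mk.injEq, smul_eq_mul]
    simp [hab]

/-- Determinant factorization for the block circulant channel: with `ω = exp(2πi/N)`,
`C_H` the block circulant matrix with `(j,k)`-th `n_r × n_t` block `H_((k-j) mod N)`,
and `Δ_n = Σ_l ω^(nl) H_l`, for every real `c ≥ 0`:
`det(I + c · C_H C_Hᴴ) = ∏_n det(I + c · Δ_n Δ_nᴴ)`. -/
theorem stmt6 (N nr nt : ℕ) (hN : 1 ≤ N)
    (H : Fin N → Matrix (Fin nr) (Fin nt) ℂ)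
    (ω : ℂ) (hω : ω = Complex.exp (2 * Real.pi * Complex.I / N))
    (CH : Matrix (Fin N × Fin nr) (Fin N × Fin nt) ℂ)
    (hCH : ∀ (j k : Fin N) (a : Fin nr) (b : Fin nt), CH (j, a) (k, b) = H (k - j) a b)
    (Δ : Fin N → Matrix (Fin nr) (Fin nt) ℂ)
    (hΔ : ∀ n : Fin N, Δ n = ∑ l : Fin N, ω ^ ((n : ℕ) * (l : ℕ)) • H l)
    (c : ℝ) (hc : 0 ≤ c) :
    ((1 : Matrix (Fin N × Fin nr) (Fin N × Fin nr) ℂ) + (c : ℂ) • (CH * CHᴴ)).det =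
      ∏ n : Fin N, ((1 : Matrix (Fin nr) (Fin nr) ℂ) + (c : ℂ) • (Δ n * (Δ n)ᴴ)).det := by
  haveI : NeZero N := ⟨by omega⟩
  have hN0 : (N : ℂ) ≠ 0 := Nat.cast_ne_zero.mpr (by omega)
  have hprim : IsPrimitiveRoot ω N := by
    rw [hω]; exact Complex.isPrimitiveRoot_exp N (by omega)
  have hωN : ω ^ N = 1 := hprim.pow_eq_one
  have hω0 : ω ≠ 0 := hprim.ne_zero (by omega)
  have hconj : (starRingEnd ℂ) ω = ω⁻¹ := by
    rw [hω, ← Complex.exp_conj, ← Complex.exp_neg]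
    congr 1
    rw [map_div₀]
    simp only [_root_.map_mul, Complex.conj_I, Complex.conj_ofReal, map_ofNat, map_natCast]
    ring
  have hmod : ∀ m : ℕ, ω ^ (m % N) = ω ^ m := by
    intro m
    conv_rhs => rw [← Nat.mod_add_div m N]
    rw [pow_add, pow_mul, hωN, one_pow, mul_one]
  have hadd : ∀ a b : Fin N, ω ^ ((a + b : Fin N) : ℕ) = ω ^ (a : ℕ) * ω ^ (b : ℕ) := by
    intro a b
    rw [Fin.val_add, hmod, pow_add]
  have hneg : ∀ a : Fin N, ω ^ ((-a : Fin N) : ℕ) = (ω ^ (a : ℕ))⁻¹ := by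
    intro a
    have h1 : ω ^ ((-a + a : Fin N) : ℕ) = 1 := by simp
    rw [hadd] at h1
    exact eq_inv_of_mul_eq_one_left h1
  have hsum : ∀ j k : Fin N,
      ∑ q : Fin N, ω ^ ((j : ℕ) * (q : ℕ)) * (starRingEnd ℂ) (ω ^ ((k : ℕ) * (q : ℕ)))
        = if j = k then (N : ℂ) else 0 := by
    intro j k
    have hterm : ∀ q : Fin N,
        ω ^ ((j : ℕ) * (q : ℕ)) * (starRingEnd ℂ) (ω ^ ((k : ℕ) * (q : ℕ)))
          = (ω ^ (j : ℕ) * (ω ^ (k : ℕ))⁻¹) ^ (q : ℕ) := by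
      intro q
      simp [map_pow, hconj, mul_pow, inv_pow, pow_mul]
    rw [Finset.sum_congr rfl (fun q _ => hterm q)]
    set z : ℂ := ω ^ (j : ℕ) * (ω ^ (k : ℕ))⁻¹ with hz
    have hzN : z ^ N = 1 := by
      rw [hz, mul_pow, ← pow_mul, mul_comm (j : ℕ) N, pow_mul, hωN, one_pow, one_mul,
        inv_pow, ← pow_mul, mul_comm (k : ℕ) N, pow_mul, hωN, one_pow, inv_one]
    rw [Fin.sum_univ_eq_sum_range (fun i => z ^ i) N]
    by_cases hjk : j = k
    · subst hjk
      have hz1 : z = 1 := by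
        rw [hz, mul_inv_cancel₀ (pow_ne_zero _ hω0)]
      simp [hz1]
    · have hz1 : z ≠ 1 := by
        intro h
        apply hjk
        rw [hz, mul_inv_eq_one₀ (pow_ne_zero _ hω0)] at h
        exact Fin.ext (hprim.pow_inj j.2 k.2 h)
      rw [geom_sum_eq hz1, hzN]
      simp [hjk]
  have hconjpow : ∀ j l : Fin N,
      (starRingEnd ℂ) (ω ^ ((j : ℕ) * (l : ℕ))) = ω ^ (((-j : Fin N) : ℕ) * (l : ℕ)) := by
    intro j l
    have h1 : (starRingEnd ℂ) (ω ^ ((j : ℕ) * (l : ℕ))) = (ω ^ ((j : ℕ) * (l : ℕ)))⁻¹ := by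
      rw [map_pow, hconj, inv_pow]
    have h2 : ω ^ (((-j : Fin N) : ℕ) * (l : ℕ)) = (ω ^ ((j : ℕ) * (l : ℕ)))⁻¹ := by
      rw [pow_mul, hneg, inv_pow, ← pow_mul]
    rw [h1, h2]
  have hmuladd : ∀ k m l : Fin N,
      ω ^ ((k : ℕ) * ((m + l : Fin N) : ℕ))
        = ω ^ ((k : ℕ) * (m : ℕ)) * ω ^ ((k : ℕ) * (l : ℕ)) := by
    intro k m l
    rw [mul_comm (k : ℕ), pow_mul, hadd, mul_pow, ← pow_mul, ← pow_mul,
      mul_comm (m : ℕ), mul_comm (l : ℕ)]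
  set U : Matrix (Fin N × Fin nr) (Fin N × Fin nr) ℂ :=
    blockDiagonal (fun _ : Fin nr => Matrix.of fun j k : Fin N => ω ^ ((j : ℕ) * (k : ℕ))) with hU
  set W : Matrix (Fin N × Fin nt) (Fin N × Fin nt) ℂ :=
    blockDiagonal (fun _ : Fin nt => Matrix.of fun j k : Fin N => ω ^ ((j : ℕ) * (k : ℕ))) with hW
  set B : Matrix (Fin nr × Fin N) (Fin nt × Fin N) ℂ :=
    blockDiagonal (fun j : Fin N => Δ (-j)) with hB
  set er : (Fin N × Fin nr) ≃ (Fin nr × Fin N) := Equiv.prodComm _ _ with her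
  set et : (Fin N × Fin nt) ≃ (Fin nt × Fin N) := Equiv.prodComm _ _ with het
  set D : Matrix (Fin N × Fin nr) (Fin N × Fin nt) ℂ := B.submatrix er et with hD
  have hUU : U * Uᴴ = (N : ℂ) • 1 := aux_dft_unitary ω hsum
  have hWW : W * Wᴴ = (N : ℂ) • 1 := aux_dft_unitary ω hsum
  have hUCH : ∀ (j : Fin N) (a : Fin nr) (q : Fin N) (p : Fin nt),
      (U * CH) (j, a) (q, p) = ∑ m : Fin N, ω ^ ((j : ℕ) * (m : ℕ)) * H (q - m) a p := by
    intro j a q p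
    rw [Matrix.mul_apply, Fintype.sum_prod_type]
    refine Finset.sum_congr rfl fun m _ => ?_
    simp [hU, blockDiagonal_apply, hCH, ite_mul, Finset.sum_ite_eq]
  have hUCW : U * CH * Wᴴ = (N : ℂ) • D := by
    ext ⟨j, a⟩ ⟨k, b⟩
    rw [Matrix.mul_apply, Fintype.sum_prod_type]
    have hstep1 : ∀ q : Fin N,
        (∑ p : Fin nt, (U * CH) (j, a) (q, p) * Wᴴ (q, p) (k, b))
          = ∑ m : Fin N, ω ^ ((j : ℕ) * (m : ℕ)) * H (q - m) a b
              * (starRingEnd ℂ) (ω ^ ((k : ℕ) * (q : ℕ))) := by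
      intro q
      have hent : ∀ p : Fin nt, Wᴴ (q, p) (k, b)
          = if b = p then (starRingEnd ℂ) (ω ^ ((k : ℕ) * (q : ℕ))) else 0 := by
        intro p
        simp [hW, conjTranspose_apply, blockDiagonal_apply, apply_ite (starRingEnd ℂ)]
      simp only [hent, mul_ite, mul_zero, Finset.sum_ite_eq, Finset.mem_univ, if_true]
      rw [hUCH, Finset.sum_mul]
    rw [Finset.sum_congr rfl fun q _ => hstep1 q, Finset.sum_comm]
    have hstep2 : ∀ m : Fin N,
        (∑ q : Fin N, ω ^ ((j : ℕ) * (m : ℕ)) * H (q - m) a b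
            * (starRingEnd ℂ) (ω ^ ((k : ℕ) * (q : ℕ))))
          = ∑ l : Fin N, ω ^ ((j : ℕ) * (m : ℕ)) * (starRingEnd ℂ) (ω ^ ((k : ℕ) * (m : ℕ)))
              * ((starRingEnd ℂ) (ω ^ ((k : ℕ) * (l : ℕ))) * H l a b) := by
      intro m
      refine (Fintype.sum_equiv (Equiv.addLeft m) _ _ fun l => ?_).symm
      have h1 : (m + l) - m = l := by abel
      rw [Equiv.coe_addLeft, h1, hmuladd, _root_.map_mul]
      ring
    rw [Finset.sum_congr rfl fun m _ => hstep2 m, Finset.sum_comm]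
    have hstep3 : ∀ l : Fin N,
        (∑ m : Fin N, ω ^ ((j : ℕ) * (m : ℕ)) * (starRingEnd ℂ) (ω ^ ((k : ℕ) * (m : ℕ)))
            * ((starRingEnd ℂ) (ω ^ ((k : ℕ) * (l : ℕ))) * H l a b))
          = (if j = k then (N : ℂ) else 0)
              * ((starRingEnd ℂ) (ω ^ ((k : ℕ) * (l : ℕ))) * H l a b) := by
      intro l
      rw [← Finset.sum_mul, hsum]
    rw [Finset.sum_congr rfl fun l _ => hstep3 l]
    simp only [Matrix.smul_apply, hD, submatrix_apply, her, het, Equiv.prodComm_apply,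
      Prod.swap_prod_mk, hB, blockDiagonal_apply, smul_eq_mul]
    by_cases hjk : j = k
    · subst hjk
      rw [hΔ (-j)]
      simp only [if_true, eq_self_iff_true, Matrix.sum_apply, Matrix.smul_apply, smul_eq_mul,
        Finset.mul_sum]
      refine Finset.sum_congr rfl fun l _ => ?_
      rw [hconjpow j l]
    · simp [hjk]
  -- Wᴴ W = N 1
  have hWHW : Wᴴ * W = (N : ℂ) • 1 := by
    have h1 : W * ((N : ℂ)⁻¹ • Wᴴ) = 1 := by
      rw [Matrix.mul_smul, hWW, smul_smul, inv_mul_cancel₀ hN0, one_smul]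
    have h2 := mul_eq_one_comm.mp h1
    calc Wᴴ * W = (N : ℂ) • (((N : ℂ)⁻¹ • Wᴴ) * W) := by
          rw [Matrix.smul_mul, smul_smul, mul_inv_cancel₀ hN0, one_smul]
      _ = (N : ℂ) • 1 := by rw [h2]
  have hKey : U * (CH * CHᴴ) * Uᴴ = (N : ℂ) • (D * Dᴴ) := by
    have h3 : (N : ℂ) • (U * (CH * CHᴴ) * Uᴴ) = (N : ℂ) • ((N : ℂ) • (D * Dᴴ)) := by
      calc (N : ℂ) • (U * (CH * CHᴴ) * Uᴴ)
          = (U * CH) * (Wᴴ * W) * (CHᴴ * Uᴴ) := by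
            rw [hWHW]
            simp only [Matrix.mul_smul, Matrix.smul_mul, Matrix.mul_one, Matrix.mul_assoc]
        _ = (U * CH * Wᴴ) * (U * CH * Wᴴ)ᴴ := by
            rw [conjTranspose_mul, conjTranspose_mul, conjTranspose_conjTranspose]
            simp only [Matrix.mul_assoc]
        _ = ((N : ℂ) • D) * ((N : ℂ) • D)ᴴ := by rw [hUCW]
        _ = (N : ℂ) • ((N : ℂ) • (D * Dᴴ)) := by
            rw [conjTranspose_smul]
            simp only [star_natCast, Matrix.smul_mul, Matrix.mul_smul]
    exact smul_right_injective _ hN0 h3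
  have hcard : Fintype.card (Fin N × Fin nr) = N * nr := by
    simp [Fintype.card_prod]
  have hdetUU : U.det * Uᴴ.det = (N : ℂ) ^ (N * nr) := by
    rw [← det_mul, hUU, det_smul, det_one, mul_one, hcard]
  have hcancel : ((1 : Matrix (Fin N × Fin nr) (Fin N × Fin nr) ℂ) + (c : ℂ) • (CH * CHᴴ)).det
      = ((1 : Matrix (Fin N × Fin nr) (Fin N × Fin nr) ℂ) + (c : ℂ) • (D * Dᴴ)).det := by
    have hmain : (U.det * Uᴴ.det) * ((1 : Matrix (Fin N × Fin nr) (Fin N × Fin nr) ℂ)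
        + (c : ℂ) • (CH * CHᴴ)).det
        = (U.det * Uᴴ.det) * ((1 : Matrix (Fin N × Fin nr) (Fin N × Fin nr) ℂ)
            + (c : ℂ) • (D * Dᴴ)).det := by
      have hconjug : U * ((1 : Matrix (Fin N × Fin nr) (Fin N × Fin nr) ℂ)
          + (c : ℂ) • (CH * CHᴴ)) * Uᴴ
          = (N : ℂ) • ((1 : Matrix (Fin N × Fin nr) (Fin N × Fin nr) ℂ) + (c : ℂ) • (D * Dᴴ)) := by
        rw [Matrix.mul_add, Matrix.add_mul, Matrix.mul_one, hUU, Matrix.mul_smul,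
          Matrix.smul_mul, hKey, smul_add, smul_smul, smul_smul, mul_comm (c : ℂ) (N : ℂ)]
      calc (U.det * Uᴴ.det) * ((1 : Matrix (Fin N × Fin nr) (Fin N × Fin nr) ℂ)
            + (c : ℂ) • (CH * CHᴴ)).det
          = (U * ((1 : Matrix (Fin N × Fin nr) (Fin N × Fin nr) ℂ)
              + (c : ℂ) • (CH * CHᴴ)) * Uᴴ).det := by
            rw [det_mul, det_mul]; ring
        _ = ((N : ℂ) • ((1 : Matrix (Fin N × Fin nr) (Fin N × Fin nr) ℂ)
              + (c : ℂ) • (D * Dᴴ))).det := by rw [hconjug]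
        _ = (U.det * Uᴴ.det) * ((1 : Matrix (Fin N × Fin nr) (Fin N × Fin nr) ℂ)
              + (c : ℂ) • (D * Dᴴ)).det := by
            rw [det_smul, hcard, hdetUU]
    exact mul_left_cancel₀ (by rw [hdetUU]; exact pow_ne_zero _ hN0) hmain
  rw [hcancel]
  have hDD : D * Dᴴ = (B * Bᴴ).submatrix er er := by
    rw [hD, conjTranspose_submatrix, submatrix_mul_equiv]
  have hsubm : (1 : Matrix (Fin N × Fin nr) (Fin N × Fin nr) ℂ) + (c : ℂ) • (D * Dᴴ)
      = ((1 : Matrix (Fin nr × Fin N) (Fin nr × Fin N) ℂ)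
          + (c : ℂ) • (B * Bᴴ)).submatrix er er := by
    rw [hDD]
    ext x y
    simp only [Matrix.add_apply, Matrix.smul_apply, Matrix.submatrix_apply, Matrix.one_apply,
      EmbeddingLike.apply_eq_iff_eq]
  rw [hsubm, det_submatrix_equiv_self]
  have hBB : B * Bᴴ = blockDiagonal (fun j : Fin N => Δ (-j) * (Δ (-j))ᴴ) := by
    rw [hB, blockDiagonal_conjTranspose, ← blockDiagonal_mul]
  have hblock : (1 : Matrix (Fin nr × Fin N) (Fin nr × Fin N) ℂ) + (c : ℂ) • (B * Bᴴ)
      = blockDiagonal (fun j : Fin N =>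
          (1 : Matrix (Fin nr) (Fin nr) ℂ) + (c : ℂ) • (Δ (-j) * (Δ (-j))ᴴ)) := by
    rw [hBB]
    calc (1 : Matrix (Fin nr × Fin N) (Fin nr × Fin N) ℂ)
          + (c : ℂ) • blockDiagonal (fun j : Fin N => Δ (-j) * (Δ (-j))ᴴ)
        = blockDiagonal (1 : Fin N → Matrix (Fin nr) (Fin nr) ℂ)
          + blockDiagonal ((c : ℂ) • fun j : Fin N => Δ (-j) * (Δ (-j))ᴴ) := by
          rw [blockDiagonal_one, blockDiagonal_smul]
      _ = blockDiagonal ((1 : Fin N → Matrix (Fin nr) (Fin nr) ℂ)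
            + (c : ℂ) • fun j : Fin N => Δ (-j) * (Δ (-j))ᴴ) :=
          (blockDiagonal_add _ _).symm
      _ = blockDiagonal (fun j : Fin N =>
            (1 : Matrix (Fin nr) (Fin nr) ℂ) + (c : ℂ) • (Δ (-j) * (Δ (-j))ᴴ)) := rfl
  rw [hblock, det_blockDiagonal]
  exact Fintype.prod_equiv (Equiv.neg (Fin N)) _ _ fun j => rfl
end

section
/- Let R be an N×N positive semidefinite Hermitian complex matrix of rank ρ ≥ 1 with smallest nonzero eigenvalue σ², let R^{1/2} denote its positive semidefinite square root, let n_t ≥ 1, and let D be an invertible Nn_t × Nn_t complex matrix. Set Θ = (R^{1/2} ⊗ I_{n_t}) (D D†) (R^{1/2} ⊗ I_{n_t}) and p = Nn_t. Then for every i with 1 ≤ i ≤ ρn_t, the i-th smallest nonzero eigenvalue of Θ satisfies λ_{p−ρn_t+i}(Θ) ≥ σ² · λ_i(D D†). -/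
open Matrix
open scoped Kronecker ComplexOrder

/-- The positive semidefinite square root of a positive semidefinite matrix
(restored: `Matrix.PosSemidef.sqrt` no longer exists in Mathlib). -/
noncomputable def Matrix.PosSemidef.sqrt {n 𝕜 : Type*} [Fintype n] [DecidableEq n] [RCLike 𝕜]
    {A : Matrix n n 𝕜} (hA : A.PosSemidef) : Matrix n n 𝕜 :=
  (hA.1.eigenvectorUnitary : Matrix n n 𝕜) *
    diagonal ((↑) ∘ (fun x : ℝ => Real.sqrt x) ∘ hA.1.eigenvalues) *
    (star hA.1.eigenvectorUnitary : Matrix n n 𝕜)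

lemma psd_sqrt_psd {N : ℕ} {R : Matrix (Fin N) (Fin N) ℂ} (hR : R.PosSemidef) :
    hR.sqrt.PosSemidef := by
  have hd : (diagonal ((↑) ∘ (fun x : ℝ => Real.sqrt x) ∘ hR.1.eigenvalues) :
      Matrix (Fin N) (Fin N) ℂ).PosSemidef :=
    posSemidef_diagonal_iff.mpr fun i => by
      simp only [Function.comp_apply]
      exact RCLike.ofReal_nonneg.mpr (Real.sqrt_nonneg _)
  exact hd.mul_mul_conjTranspose_same (hR.1.eigenvectorUnitary : Matrix (Fin N) (Fin N) ℂ)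

lemma psd_sqrt_mul_self {N : ℕ} {R : Matrix (Fin N) (Fin N) ℂ} (hR : R.PosSemidef) :
    hR.sqrt * hR.sqrt = R := by
  have hUU' : star (hR.1.eigenvectorUnitary : Matrix (Fin N) (Fin N) ℂ) *
      (hR.1.eigenvectorUnitary : Matrix (Fin N) (Fin N) ℂ) = 1 :=
    (Matrix.mem_unitaryGroup_iff').mp hR.1.eigenvectorUnitary.2
  have hDD : (diagonal (RCLike.ofReal ∘ (fun x : ℝ => Real.sqrt x) ∘ hR.1.eigenvalues) :
      Matrix (Fin N) (Fin N) ℂ) *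
      diagonal (RCLike.ofReal ∘ (fun x : ℝ => Real.sqrt x) ∘ hR.1.eigenvalues)
      = diagonal (RCLike.ofReal ∘ hR.1.eigenvalues) := by
    rw [diagonal_mul_diagonal]
    congr 1
    funext i
    simp only [Function.comp_apply]
    rw [← RCLike.ofReal_mul, Real.mul_self_sqrt (hR.eigenvalues_nonneg i)]
  conv_rhs => rw [hR.1.spectral_theorem, Unitary.conjStarAlgAut_apply]
  simp only [Matrix.PosSemidef.sqrt, Matrix.mul_assoc]
  rw [← Matrix.mul_assoc (star _) _, hUU', Matrix.one_mul, ← Matrix.mul_assoc _ _ (star _), hDD]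

section Helpers

variable {ι κ : Type*} [Fintype ι] [DecidableEq ι]

lemma exists_sorted {M : Matrix ι ι ℂ} (hM : M.IsHermitian) :
    ∃ w : Fin (Fintype.card ι) ≃ ι,
      (∀ k : Fin (Fintype.card ι), eigAsc M k = hM.eigenvalues (w k)) ∧
      Monotone (hM.eigenvalues ∘ w) := by
  classical
  set p := Fintype.card ι with hp
  let e : ι ≃ Fin p := Fintype.equivFin ι
  let f : Fin p → ℝ := hM.eigenvalues ∘ e.symm
  let σ := Tuple.sort f
  have hmult : (Finset.univ.val.map hM.eigenvalues : Multiset ℝ) = ↑(List.ofFn (f ∘ σ)) := by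
    rw [List.ofFn_eq_map, ← Multiset.map_coe]
    have h0 : (↑(List.finRange p) : Multiset (Fin p)) = Finset.univ.val := rfl
    rw [h0]
    conv_lhs => rw [← Finset.map_univ_equiv ((σ : Fin p ≃ Fin p).trans e.symm)]
    rw [Finset.map_val, Multiset.map_map]
    rfl
  have hperm : ((Finset.univ.val.map hM.eigenvalues).sort (· ≤ ·)).Perm (List.ofFn (f ∘ σ)) := by
    rw [← Multiset.coe_eq_coe, Multiset.sort_eq, hmult]
  have hlist : (Finset.univ.val.map hM.eigenvalues).sort (· ≤ ·) = List.ofFn (f ∘ σ) :=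
    List.Perm.eq_of_pairwise' (Multiset.pairwise_sort _ _)
      (List.pairwise_ofFn.mpr fun _ _ h => Tuple.monotone_sort f h.le) hperm
  refine ⟨(σ : Fin p ≃ Fin p).trans e.symm, ?_, Tuple.monotone_sort f⟩
  intro k
  rw [eigAsc, dif_pos hM, hlist, List.getD_eq_getElem _ _ (by simp [k.isLt])]
  simp [Equiv.trans, f]

lemma ortho_dot {M : Matrix ι ι ℂ} (hM : M.IsHermitian) (i j : ι) :
    star (⇑(hM.eigenvectorBasis i) : ι → ℂ) ⬝ᵥ ⇑(hM.eigenvectorBasis j)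
      = if i = j then 1 else 0 := by
  have := (orthonormal_iff_ite (𝕜 := ℂ)).mp hM.eigenvectorBasis.orthonormal i j
  rw [EuclideanSpace.inner_eq_star_dotProduct, dotProduct_comm] at this
  exact this

lemma span_expand {u : ι → (ι → ℂ)}
    (hu : ∀ i j, star (u i) ⬝ᵥ u j = if i = j then 1 else 0) (S : Finset ι)
    {x : ι → ℂ} (hx : x ∈ Submodule.span ℂ (u '' ↑S)) :
    x = ∑ j ∈ S, (star (u j) ⬝ᵥ x) • u j := by
  induction hx using Submodule.span_induction with
  | mem y hy =>
      obtain ⟨t, ht, rfl⟩ := hy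
      rw [Finset.sum_congr rfl (fun j _ => by rw [hu j t])]
      simp only [ite_smul, one_smul, zero_smul]
      rw [Finset.sum_ite_eq' S t u]
      rw [if_pos (by exact_mod_cast ht)]
  | zero => simp
  | add y z hy hz ihy ihz =>
      simp only [dotProduct_add, add_smul, Finset.sum_add_distrib]
      rw [← ihy, ← ihz]
  | smul c y hy ihy =>
      simp only [dotProduct_smul, smul_eq_mul, mul_smul]
      rw [← Finset.smul_sum, ← ihy]

lemma sum_dotProduct' (S : Finset κ) (f : κ → ι → ℂ) (y : ι → ℂ) :
    (∑ j ∈ S, f j) ⬝ᵥ y = ∑ j ∈ S, f j ⬝ᵥ y := by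
  simp only [dotProduct, Finset.sum_apply, Finset.sum_mul]
  exact Finset.sum_comm

lemma dotProduct_sum' (S : Finset κ) (y : ι → ℂ) (f : κ → ι → ℂ) :
    y ⬝ᵥ (∑ j ∈ S, f j) = ∑ j ∈ S, y ⬝ᵥ f j := by
  simp only [dotProduct, Finset.sum_apply, Finset.mul_sum]
  exact Finset.sum_comm

lemma mulVec_sum_eig {u : ι → (ι → ℂ)}
    {P : Matrix ι ι ℂ} {ν : ι → ℝ} (hP : ∀ j, P *ᵥ u j = (ν j : ℂ) • u j)
    (S : Finset ι) (d : ι → ℂ) :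
    P *ᵥ (∑ j ∈ S, d j • u j) = ∑ j ∈ S, d j • ((ν j : ℂ) • u j) := by
  rw [← Matrix.mulVecLin_apply, map_sum]
  refine Finset.sum_congr rfl fun j _ => ?_
  rw [LinearMap.map_smul, Matrix.mulVecLin_apply, hP]

lemma quad_sum {u : ι → (ι → ℂ)}
    (hu : ∀ i j, star (u i) ⬝ᵥ u j = if i = j then 1 else 0)
    {P : Matrix ι ι ℂ} {ν : ι → ℝ} (hP : ∀ j, P *ᵥ u j = (ν j : ℂ) • u j)
    (S : Finset ι) (d : ι → ℂ) :
    star (∑ j ∈ S, d j • u j) ⬝ᵥ (P *ᵥ (∑ j ∈ S, d j • u j))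
      = ∑ j ∈ S, ((ν j : ℂ) * Complex.normSq (d j)) := by
  have h2 : star (∑ j ∈ S, d j • u j)
      = ∑ j ∈ S, (starRingEnd ℂ (d j)) • star (u j) := by
    rw [star_sum]
    refine Finset.sum_congr rfl fun j _ => ?_
    rw [star_smul]
    rfl
  rw [mulVec_sum_eig hP, h2, sum_dotProduct']
  refine Finset.sum_congr rfl fun j hj => ?_
  rw [smul_dotProduct, dotProduct_sum']
  rw [Finset.sum_congr rfl (fun k _ => by
    rw [dotProduct_smul, dotProduct_smul, hu j k])]
  simp only [smul_eq_mul, mul_ite, mul_one, mul_zero]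
  rw [Finset.sum_ite_eq S j, if_pos hj, Complex.normSq_eq_conj_mul_self]
  ring

lemma quad_eval {u : ι → (ι → ℂ)}
    (hu : ∀ i j, star (u i) ⬝ᵥ u j = if i = j then 1 else 0)
    {P : Matrix ι ι ℂ} {ν : ι → ℝ} (hP : ∀ j, P *ᵥ u j = (ν j : ℂ) • u j)
    (S : Finset ι) {x : ι → ℂ} (hx : x ∈ Submodule.span ℂ (u '' ↑S)) :
    Complex.re (star x ⬝ᵥ (P *ᵥ x))
      = ∑ j ∈ S, ν j * Complex.normSq (star (u j) ⬝ᵥ x) := by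
  have hrepr := span_expand hu S hx
  set d : ι → ℂ := fun j => star (u j) ⬝ᵥ x with hd
  conv_lhs => rw [hrepr]
  rw [quad_sum hu hP S d, Complex.re_sum]
  refine Finset.sum_congr rfl fun j _ => ?_
  rw [← Complex.ofReal_mul, Complex.ofReal_re]

lemma nsq_eval {u : ι → (ι → ℂ)}
    (hu : ∀ i j, star (u i) ⬝ᵥ u j = if i = j then 1 else 0)
    (S : Finset ι) {x : ι → ℂ} (hx : x ∈ Submodule.span ℂ (u '' ↑S)) :
    Complex.re (star x ⬝ᵥ x) = ∑ j ∈ S, Complex.normSq (star (u j) ⬝ᵥ x) := by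
  have h := quad_eval hu (P := (1 : Matrix ι ι ℂ)) (ν := fun _ => 1)
    (fun j => by rw [Matrix.one_mulVec]; simp) S hx
  simpa using h

lemma quad_ge_of_mem {u : ι → (ι → ℂ)}
    (hu : ∀ i j, star (u i) ⬝ᵥ u j = if i = j then 1 else 0)
    {P : Matrix ι ι ℂ} {ν : ι → ℝ} (hP : ∀ j, P *ᵥ u j = (ν j : ℂ) • u j)
    (S : Finset ι) {x : ι → ℂ} (hx : x ∈ Submodule.span ℂ (u '' ↑S))
    {c : ℝ} (hc : ∀ j ∈ S, c ≤ ν j) :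
    c * Complex.re (star x ⬝ᵥ x) ≤ Complex.re (star x ⬝ᵥ (P *ᵥ x)) := by
  rw [quad_eval hu hP S hx, nsq_eval hu S hx, Finset.mul_sum]
  exact Finset.sum_le_sum fun j hj =>
    mul_le_mul_of_nonneg_right (hc j hj) (Complex.normSq_nonneg _)

lemma quad_le_of_mem {u : ι → (ι → ℂ)}
    (hu : ∀ i j, star (u i) ⬝ᵥ u j = if i = j then 1 else 0)
    {P : Matrix ι ι ℂ} {ν : ι → ℝ} (hP : ∀ j, P *ᵥ u j = (ν j : ℂ) • u j)
    (S : Finset ι) {x : ι → ℂ} (hx : x ∈ Submodule.span ℂ (u '' ↑S))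
    {c : ℝ} (hc : ∀ j ∈ S, ν j ≤ c) :
    Complex.re (star x ⬝ᵥ (P *ᵥ x)) ≤ c * Complex.re (star x ⬝ᵥ x) := by
  rw [quad_eval hu hP S hx, nsq_eval hu S hx, Finset.mul_sum]
  exact Finset.sum_le_sum fun j hj =>
    mul_le_mul_of_nonneg_right (hc j hj) (Complex.normSq_nonneg _)

lemma nsq_pos {x : ι → ℂ} (hx : x ≠ 0) : 0 < Complex.re (star x ⬝ᵥ x) := by
  have h : star x ⬝ᵥ x = ∑ i : ι, (Complex.normSq (x i) : ℂ) := by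
    refine Finset.sum_congr rfl fun i _ => ?_
    rw [Complex.normSq_eq_conj_mul_self]
    rfl
  rw [h, Complex.re_sum]
  obtain ⟨i, hi⟩ : ∃ i, x i ≠ 0 := Function.ne_iff.mp hx
  refine Finset.sum_pos' (fun j _ => by simp [Complex.normSq_nonneg]) ⟨i, Finset.mem_univ i, ?_⟩
  simp [Complex.normSq_pos.mpr hi]

lemma lin_indep_of_ortho {u : ι → (ι → ℂ)}
    (hu : ∀ i j, star (u i) ⬝ᵥ u j = if i = j then 1 else 0) :
    LinearIndependent ℂ u := by
  rw [Fintype.linearIndependent_iff]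
  intro c hc i
  have h0 : star (u i) ⬝ᵥ (∑ j : ι, c j • u j) = c i := by
    rw [dotProduct_sum']
    rw [Finset.sum_congr rfl (fun k _ => by rw [dotProduct_smul, hu i k])]
    simp [Finset.sum_ite_eq]
  rw [hc] at h0
  simpa using h0.symm

lemma finrank_span_ortho {u : ι → (ι → ℂ)}
    (hu : ∀ i j, star (u i) ⬝ᵥ u j = if i = j then 1 else 0) (S : Finset ι) :
    Module.finrank ℂ (Submodule.span ℂ (u '' ↑S)) = S.card := by
  have hli := (lin_indep_of_ortho hu).comp ((↑) : {j // j ∈ S} → ι) Subtype.val_injective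
  have himg : u '' ↑S = Set.range (u ∘ ((↑) : {j // j ∈ S} → ι)) := by
    rw [Set.range_comp]
    congr 1
    simp [Set.ext_iff]
  rw [himg, finrank_span_eq_card hli, Fintype.card_coe]

lemma mulVec_mem_span {u : ι → (ι → ℂ)}
    (hu : ∀ i j, star (u i) ⬝ᵥ u j = if i = j then 1 else 0)
    {P : Matrix ι ι ℂ} {ν : ι → ℝ} (hP : ∀ j, P *ᵥ u j = (ν j : ℂ) • u j)
    (S : Finset ι) {x : ι → ℂ} (hx : x ∈ Submodule.span ℂ (u '' ↑S)) :
    P *ᵥ x ∈ Submodule.span ℂ (u '' ↑S) := by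
  have hrepr := span_expand hu S hx
  rw [hrepr, mulVec_sum_eig hP]
  refine Submodule.sum_mem _ fun j hj => Submodule.smul_mem _ _ (Submodule.smul_mem _ _ ?_)
  exact Submodule.subset_span ⟨j, by exact_mod_cast hj, rfl⟩

lemma card_filter_le_nat (p k : ℕ) (hk : k < p) :
    (Finset.univ.filter (fun t : Fin p => (t : ℕ) ≤ k)).card = k + 1 := by
  have : (Finset.univ.filter (fun t : Fin p => (t : ℕ) ≤ k))
      = Finset.attachFin (Finset.range (k + 1))
        (fun m hm => lt_of_lt_of_le (Finset.mem_range.mp hm) hk) := by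
    ext a
    simp [Nat.lt_succ_iff]
  rw [this, Finset.card_attachFin, Finset.card_range]

lemma card_filter_ge_nat (p i0 : ℕ) (hi : i0 ≤ p) :
    (Finset.univ.filter (fun t : Fin p => i0 ≤ (t : ℕ))).card = p - i0 := by
  have h1 : (Finset.univ.filter (fun t : Fin p => ¬ i0 ≤ (t : ℕ))).card = i0 := by
    have : (Finset.univ.filter (fun t : Fin p => ¬ i0 ≤ (t : ℕ)))
        = Finset.attachFin (Finset.range i0)
          (fun m hm => lt_of_lt_of_le (Finset.mem_range.mp hm) hi) := by
      ext a
      simp only [Finset.mem_filter, Finset.mem_univ, true_and, Finset.mem_attachFin,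
        Finset.mem_range, not_le]
    rw [this, Finset.card_attachFin, Finset.card_range]
  have h2 := Finset.card_filter_add_card_filter_not
    (s := (Finset.univ : Finset (Fin p))) (p := fun t : Fin p => i0 ≤ (t : ℕ))
  rw [h1] at h2
  simp only [Finset.card_univ, Fintype.card_fin] at h2
  omega

lemma card_filter_equiv {κ : Type*} [Fintype κ] [DecidableEq κ] (w : κ ≃ ι) (pr : κ → Prop)
    [DecidablePred pr] :
    (Finset.univ.filter fun j : ι => pr (w.symm j)).card = (Finset.univ.filter pr).card := by
  have : (Finset.univ.filter fun j : ι => pr (w.symm j))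
      = Finset.map w.toEmbedding (Finset.univ.filter pr) := by
    ext j
    simp only [Finset.mem_filter, Finset.mem_univ, true_and, Finset.mem_map,
      Equiv.coe_toEmbedding]
    constructor
    · intro h; exact ⟨w.symm j, h, w.apply_symm_apply j⟩
    · rintro ⟨t, ht, rfl⟩; simpa using ht
  rw [this, Finset.card_map]

lemma eig_val_of_mulVec {M : Matrix ι ι ℂ} (hM : M.IsHermitian) {v : ι → ℂ} (hv : v ≠ 0)
    {t : ℝ} (ht : M *ᵥ v = (t : ℝ) • v) : ∃ a, hM.eigenvalues a = t := by
  classical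
  set U : Matrix ι ι ℂ := (hM.eigenvectorUnitary : Matrix ι ι ℂ) with hU
  have hUU : U * star U = 1 := (Matrix.mem_unitaryGroup_iff).mp hM.eigenvectorUnitary.2
  have hUU' : star U * U = 1 := (Matrix.mem_unitaryGroup_iff').mp hM.eigenvectorUnitary.2
  set y : ι → ℂ := star U *ᵥ v with hy
  have hy0 : y ≠ 0 := by
    intro h
    apply hv
    have : U *ᵥ y = v := by
      rw [hy, Matrix.mulVec_mulVec, hUU, Matrix.one_mulVec]
    rw [h, Matrix.mulVec_zero] at this
    exact this.symm
  have hdiag : Matrix.diagonal (RCLike.ofReal ∘ hM.eigenvalues) *ᵥ y = (t : ℝ) • y := by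
    have h1 : star U * M = Matrix.diagonal (RCLike.ofReal ∘ hM.eigenvalues) * star U := by
      conv_lhs => rw [hM.spectral_theorem, Unitary.conjStarAlgAut_apply]
      rw [← Matrix.mul_assoc, ← Matrix.mul_assoc, hUU', Matrix.one_mul]
    calc Matrix.diagonal (RCLike.ofReal ∘ hM.eigenvalues) *ᵥ y
        = (Matrix.diagonal (RCLike.ofReal ∘ hM.eigenvalues) * star U) *ᵥ v := by
          rw [hy, Matrix.mulVec_mulVec]
      _ = (star U * M) *ᵥ v := by rw [h1]
      _ = star U *ᵥ (M *ᵥ v) := by rw [Matrix.mulVec_mulVec]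
      _ = (t : ℝ) • y := by rw [ht, Matrix.mulVec_smul, hy]
  obtain ⟨a, ha⟩ : ∃ a, y a ≠ 0 := Function.ne_iff.mp hy0
  refine ⟨a, ?_⟩
  have := congrFun hdiag a
  rw [Matrix.mulVec_diagonal] at this
  have h2 : ((hM.eigenvalues a : ℂ)) * y a = (t : ℂ) * y a := by
    simpa [Complex.real_smul] using this
  have h3 := mul_right_cancel₀ ha h2
  exact_mod_cast h3

lemma eigAsc_ge {M : Matrix ι ι ℂ} (hM : M.IsHermitian) (k : ℕ) (hk : k < Fintype.card ι)
    (W : Submodule ℂ (ι → ℂ)) (hW : Fintype.card ι - k ≤ Module.finrank ℂ W)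
    (c : ℝ)
    (hq : ∀ x ∈ W, c * Complex.re (star x ⬝ᵥ x) ≤ Complex.re (star x ⬝ᵥ (M *ᵥ x))) :
    c ≤ eigAsc M k := by
  classical
  obtain ⟨w, hw, hmono⟩ := exists_sorted hM
  set u : ι → (ι → ℂ) := fun j => ⇑(hM.eigenvectorBasis j) with hudef
  have hu : ∀ i j, star (u i) ⬝ᵥ u j = if i = j then 1 else 0 := ortho_dot hM
  set T : Finset ι := Finset.univ.filter (fun j : ι => ((w.symm j : Fin _) : ℕ) ≤ k) with hT
  have hTcard : T.card = k + 1 := by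
    rw [hT, card_filter_equiv w (fun t => (t : ℕ) ≤ k), card_filter_le_nat _ k hk]
  set V := Submodule.span ℂ (u '' ↑T) with hV
  have hVrank : Module.finrank ℂ V = k + 1 := by
    rw [hV, finrank_span_ortho hu, hTcard]
  have hinf : V ⊓ W ≠ ⊥ := by
    intro hbot
    have h1 := Submodule.finrank_sup_add_finrank_inf_eq V W
    rw [hbot] at h1
    have h2 : Module.finrank ℂ ↥(V ⊔ W) ≤ Fintype.card ι := by
      have := Submodule.finrank_le (V ⊔ W)
      simpa [Module.finrank_pi] using this
    rw [finrank_bot] at h1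
    omega
  obtain ⟨x, hxmem, hx0⟩ := Submodule.exists_mem_ne_zero_of_ne_bot hinf
  have hxV : x ∈ V := hxmem.1
  have hxW : x ∈ W := hxmem.2
  have hP' : ∀ j, M *ᵥ u j = ((hM.eigenvalues j : ℝ) : ℂ) • u j := by
    intro j
    rw [hudef, hM.mulVec_eigenvectorBasis]
    funext a
    simp [Complex.real_smul]
  have hup : Complex.re (star x ⬝ᵥ (M *ᵥ x)) ≤ eigAsc M k * Complex.re (star x ⬝ᵥ x) := by
    refine quad_le_of_mem hu hP' T hxV fun j hj => ?_
    have hjk : ((w.symm j : Fin _) : ℕ) ≤ k := by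
      rw [hT] at hj
      simpa using hj
    have : hM.eigenvalues j = (hM.eigenvalues ∘ w) (w.symm j) := by simp
    rw [this, hw ⟨k, hk⟩]
    exact hmono (by simpa [Fin.le_def] using hjk)
  have hlow := hq x hxW
  have hpos := nsq_pos hx0
  nlinarith [hup, hlow, hpos]

end Helpers


lemma rank_kronecker_one_ge {N nt : ℕ} (q : Matrix (Fin N) (Fin N) ℂ) :
    q.rank * nt ≤ (q ⊗ₖ (1 : Matrix (Fin nt) (Fin nt) ℂ)).rank := by
  classical
  obtain hbas : Module.Basis (Fin q.rank) ℂ ↥(LinearMap.range q.mulVecLin) :=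
    Module.finBasisOfFinrankEq ℂ _ rfl
  set y : Fin q.rank → (Fin N → ℂ) := fun s => ↑(hbas s) with hy
  have hyli : LinearIndependent ℂ y :=
    hbas.linearIndependent.map' (Submodule.subtype _) (Submodule.ker_subtype _)
  have hymem : ∀ s, ∃ xv, q.mulVecLin xv = y s := fun s => (hbas s).2
  choose xv hxv using hymem
  set z : Fin q.rank × Fin nt → (Fin N × Fin nt → ℂ) :=
    fun sb ad => if ad.2 = sb.2 then y sb.1 ad.1 else 0 with hz
  have hzmem : ∀ sb, z sb ∈ LinearMap.range (q ⊗ₖ (1 : Matrix (Fin nt) (Fin nt) ℂ)).mulVecLin := by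
    rintro ⟨s, b⟩
    refine ⟨fun cd => if cd.2 = b then xv s cd.1 else 0, ?_⟩
    funext ad
    obtain ⟨a, d⟩ := ad
    have hya : y s a = ∑ c, q a c * xv s c := by
      rw [← hxv s]; rfl
    show ((q ⊗ₖ (1 : Matrix (Fin nt) (Fin nt) ℂ)) *ᵥ _) (a, d) = _
    simp only [Matrix.mulVec, dotProduct, Fintype.sum_prod_type,
      Matrix.kroneckerMap_apply, Matrix.one_apply, mul_ite, mul_one, mul_zero, ite_mul, zero_mul]
    simp only [Finset.sum_ite_eq, Finset.mem_univ, if_true, hz]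
    by_cases hdb : d = b
    · simp [hdb, hya]
    · simp [hdb]
  have hzli : LinearIndependent ℂ z := by
    rw [Fintype.linearIndependent_iff]
    intro c hc sb
    obtain ⟨s, b⟩ := sb
    have h1 : ∑ s' : Fin q.rank, c (s', b) • y s' = 0 := by
      funext a
      have h2 := congrFun hc (a, b)
      simp only [Finset.sum_apply, Pi.smul_apply, Pi.zero_apply, smul_eq_mul] at h2 ⊢
      rw [Fintype.sum_prod_type] at h2
      simpa [hz, Finset.sum_ite_eq', mul_ite] using h2
    exact (Fintype.linearIndependent_iff.mp hyli) _ h1 s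
  have hspan : Submodule.span ℂ (Set.range z)
      ≤ LinearMap.range (q ⊗ₖ (1 : Matrix (Fin nt) (Fin nt) ℂ)).mulVecLin :=
    Submodule.span_le.mpr (by rintro _ ⟨sb, rfl⟩; exact hzmem sb)
  have hmono := Submodule.finrank_mono hspan
  rw [finrank_span_eq_card hzli] at hmono
  rw [Fintype.card_prod, Fintype.card_fin, Fintype.card_fin] at hmono
  exact hmono

set_option synthInstance.maxHeartbeats 1000000
set_option maxHeartbeats 1000000

/-- For `Θ = (R^{1/2} ⊗ I_{n_t}) (D Dᴴ) (R^{1/2} ⊗ I_{n_t})` with `R` positive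
semidefinite of rank `ρ ≥ 1`, smallest nonzero eigenvalue `σ² = λ_{N-ρ+1}(R)`, and
`D` invertible of size `p = N n_t`, the nonzero eigenvalues of `Θ` satisfy
`λ_{p-ρn_t+i}(Θ) ≥ σ² · λ_i(D Dᴴ)` for `1 ≤ i ≤ ρ n_t`
(eigenvalues in ascending order). -/
theorem stmt9 (N nt ρ : ℕ) (hnt : 1 ≤ nt) (hρ1 : 1 ≤ ρ)
    (R : Matrix (Fin N) (Fin N) ℂ) (hR : R.PosSemidef) (hρ : R.rank = ρ)
    (σsq : ℝ) (hσ : σsq = eigAsc R (N - ρ))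
    (D : Matrix (Fin N × Fin nt) (Fin N × Fin nt) ℂ) (hD : IsUnit D)
    (Θ : Matrix (Fin N × Fin nt) (Fin N × Fin nt) ℂ)
    (hΘ : Θ = (hR.sqrt ⊗ₖ (1 : Matrix (Fin nt) (Fin nt) ℂ)) * (D * Dᴴ) *
      (hR.sqrt ⊗ₖ (1 : Matrix (Fin nt) (Fin nt) ℂ)))
    (i : ℕ) (hi1 : 1 ≤ i) (hi : i ≤ ρ * nt) :
    σsq * eigAsc (D * Dᴴ) (i - 1) ≤ eigAsc Θ (N * nt - ρ * nt + i - 1) := by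
  classical
  subst hΘ
  set q : Matrix (Fin N) (Fin N) ℂ := hR.sqrt with hqdef
  set B : Matrix (Fin N × Fin nt) (Fin N × Fin nt) ℂ :=
    q ⊗ₖ (1 : Matrix (Fin nt) (Fin nt) ℂ) with hBdef
  set A : Matrix (Fin N × Fin nt) (Fin N × Fin nt) ℂ := D * Dᴴ with hAdef
  have hA : A.PosSemidef := Matrix.posSemidef_self_mul_conjTranspose D
  have hqps : q.PosSemidef := psd_sqrt_psd hR
  have hqq : q * q = R := psd_sqrt_mul_self hR
  -- B is Hermitian
  have hBH : B.IsHermitian := by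
    show Bᴴ = B
    ext ab cd
    obtain ⟨a, b⟩ := ab
    obtain ⟨c, d⟩ := cd
    simp only [hBdef, Matrix.conjTranspose_apply, Matrix.kroneckerMap_apply, star_mul']
    rw [← Matrix.conjTranspose_apply q, hqps.1,
      show star ((1 : Matrix (Fin nt) (Fin nt) ℂ) d b)
        = (1 : Matrix (Fin nt) (Fin nt) ℂ)ᴴ b d from rfl, Matrix.conjTranspose_one]
  have hBB : B * B = R ⊗ₖ (1 : Matrix (Fin nt) (Fin nt) ℂ) := by
    rw [hBdef, ← Matrix.mul_kronecker_mul, hqq, Matrix.one_mul]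
  have hΘH : (B * A * B).IsHermitian := by
    show (B * A * B)ᴴ = B * A * B
    rw [Matrix.conjTranspose_mul, Matrix.conjTranspose_mul, hBH.eq, hA.1.eq]
    simp only [Matrix.mul_assoc]
  have hcard : Fintype.card (Fin N × Fin nt) = N * nt := by simp
  have hρN : ρ ≤ N := by
    rw [← hρ]
    have := R.rank_le_card_width
    simpa using this
  have hN1 : 1 ≤ N := hρ1.trans hρN
  have hNnt1 : 1 ≤ N * nt := Nat.one_le_iff_ne_zero.mpr (Nat.mul_ne_zero (by omega) (by omega))
  -- σ² analysis on R
  obtain ⟨wR, hwR, hmR⟩ := exists_sorted hR.1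
  have hNcard : Fintype.card (Fin N) = N := Fintype.card_fin N
  have hNρlt : N - ρ < Fintype.card (Fin N) := by rw [hNcard]; omega
  set kR : Fin (Fintype.card (Fin N)) := ⟨N - ρ, hNρlt⟩ with hkR
  set g : Fin (Fintype.card (Fin N)) → ℝ := hR.1.eigenvalues ∘ wR with hg
  have hσval : σsq = g kR := by rw [hσ]; exact hwR kR
  have hg0 : ∀ k, 0 ≤ g k := fun k => hR.eigenvalues_nonneg _
  have hcardρ : (Finset.univ.filter fun k : Fin (Fintype.card (Fin N)) => g k ≠ 0).card = ρ := by
    have h1 := hR.1.rank_eq_card_non_zero_eigs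
    rw [Fintype.card_subtype, hρ] at h1
    have h2 := card_filter_equiv (wR.symm) (fun a => hR.1.eigenvalues a ≠ 0)
    simp only [Equiv.symm_symm] at h2
    rw [hg]
    simp only [Function.comp_apply]
    rw [h2, ← h1]
  have hup : ∀ k l : Fin (Fintype.card (Fin N)), k ≤ l → g k ≠ 0 → g l ≠ 0 := by
    intro k l hkl hk
    have h1 : 0 < g k := lt_of_le_of_ne (hg0 k) (Ne.symm hk)
    have h2 : g k ≤ g l := hmR hkl
    exact ne_of_gt (lt_of_lt_of_le h1 h2)
  have hks : ∀ k : Fin (Fintype.card (Fin N)), ((N - ρ) ≤ (k : ℕ) ↔ g k ≠ 0) := by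
    intro k
    constructor
    · intro hk
      by_contra h0
      have hsub : (Finset.univ.filter fun l : Fin (Fintype.card (Fin N)) => g l ≠ 0)
          ⊆ Finset.univ.filter fun l : Fin (Fintype.card (Fin N)) => ((k : ℕ) + 1 ≤ (l : ℕ)) := by
        intro l hl
        simp only [Finset.mem_filter, Finset.mem_univ, true_and] at hl ⊢
        rcases Nat.lt_or_ge (l : ℕ) ((k : ℕ) + 1) with hlk | hlk
        · exact absurd h0 (hup l k (by rw [Fin.le_def]; omega) hl)
        · exact hlk
      have hc1 := Finset.card_le_card hsub
      rw [hcardρ, card_filter_ge_nat _ ((k : ℕ) + 1) (by omega)] at hc1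
      have hkN := k.isLt
      omega
    · intro hk
      by_contra hlt
      push_neg at hlt
      have hsub : (Finset.univ.filter fun l : Fin (Fintype.card (Fin N)) => (k : ℕ) ≤ (l : ℕ))
          ⊆ Finset.univ.filter fun l : Fin (Fintype.card (Fin N)) => g l ≠ 0 := by
        intro l hl
        simp only [Finset.mem_filter, Finset.mem_univ, true_and] at hl ⊢
        exact hup k l (by rw [Fin.le_def]; omega) hk
      have hc1 := Finset.card_le_card hsub
      rw [hcardρ, card_filter_ge_nat _ (k : ℕ) (by omega)] at hc1
      omega
  have hσpos : 0 < σsq := by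
    have h1 : g kR ≠ 0 := (hks kR).mp (by simp [hkR])
    rw [hσval]
    exact lt_of_le_of_ne (hg0 kR) (Ne.symm h1)
  have hσall : ∀ a, hR.1.eigenvalues a = 0 ∨ σsq ≤ hR.1.eigenvalues a := by
    intro a
    rcases le_or_gt (N - ρ) ((wR.symm a : Fin (Fintype.card (Fin N))) : ℕ) with h | h
    · right
      have h1 : kR ≤ wR.symm a := by simpa [hkR, Fin.le_def] using h
      have h2 : g kR ≤ g (wR.symm a) := hmR h1
      rw [hσval]
      simpa [hg] using h2
    · left
      have h1 : ¬ (N - ρ ≤ ((wR.symm a : Fin (Fintype.card (Fin N))) : ℕ)) := by omega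
      have h2 : ¬ g (wR.symm a) ≠ 0 := fun hne => h1 ((hks _).mpr hne)
      push_neg at h2
      simpa [hg] using h2
  -- eigenvalues of B: nonzero ones satisfy μ² ≥ σ²
  have hμsq : ∀ j, hBH.eigenvalues j ≠ 0 → σsq ≤ (hBH.eigenvalues j)^2 := by
    intro j hj
    set μ := hBH.eigenvalues j with hμ
    set u : Fin N × Fin nt → ℂ := ⇑(hBH.eigenvectorBasis j) with hu
    have hu0 : u ≠ 0 := by
      intro h
      apply hBH.eigenvectorBasis.orthonormal.ne_zero j
      ext a
      exact congrFun h a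
    have hBu : B *ᵥ u = μ • u := hBH.mulVec_eigenvectorBasis j
    have hB2u : (R ⊗ₖ (1 : Matrix (Fin nt) (Fin nt) ℂ)) *ᵥ u = (μ ^ 2) • u := by
      rw [← hBB, ← Matrix.mulVec_mulVec, hBu, Matrix.mulVec_smul, hBu, smul_smul, pow_two]
    obtain ⟨ab, hab⟩ := Function.ne_iff.mp hu0
    obtain ⟨a0, b0⟩ := ab
    set v : Fin N → ℂ := fun a => u (a, b0) with hv
    have hv0 : v ≠ 0 := Function.ne_iff.mpr ⟨a0, hab⟩
    have hRv : R *ᵥ v = ((μ ^ 2 : ℝ)) • v := by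
      funext a
      have h2 := congrFun hB2u (a, b0)
      simp only [Matrix.mulVec, dotProduct, Fintype.sum_prod_type,
        Matrix.kroneckerMap_apply, Matrix.one_apply, mul_ite, mul_one, mul_zero, ite_mul,
        zero_mul, Finset.sum_ite_eq, Finset.mem_univ, if_true] at h2 ⊢
      exact h2
    obtain ⟨a, ha⟩ := eig_val_of_mulVec hR.1 hv0 hRv
    rcases hσall a with h0 | hle
    · exfalso
      rw [ha] at h0
      exact pow_ne_zero 2 hj h0
    · rw [ha] at hle
      exact hle
  -- A-side subspace V
  obtain ⟨wA, hwA, hmA⟩ := exists_sorted hA.1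
  have hi0lt : i - 1 < Fintype.card (Fin N × Fin nt) := by
    rw [hcard]
    have : ρ * nt ≤ N * nt := Nat.mul_le_mul_right nt hρN
    omega
  set uA : (Fin N × Fin nt) → (Fin N × Fin nt) → ℂ :=
    fun j => ⇑(hA.1.eigenvectorBasis j) with huAdef
  have huA : ∀ a b, star (uA a) ⬝ᵥ uA b = if a = b then 1 else 0 := ortho_dot hA.1
  have hPA : ∀ j, A *ᵥ uA j = ((hA.1.eigenvalues j : ℝ) : ℂ) • uA j := by
    intro j
    rw [huAdef, hA.1.mulVec_eigenvectorBasis]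
    funext a
    simp [Complex.real_smul]
  set TA : Finset (Fin N × Fin nt) :=
    Finset.univ.filter (fun j => (i - 1) ≤ ((wA.symm j : Fin (Fintype.card (Fin N × Fin nt))) : ℕ))
    with hTA
  set V := Submodule.span ℂ (uA '' ↑TA) with hV
  have hVrank : Module.finrank ℂ V = N * nt - (i - 1) := by
    rw [hV, finrank_span_ortho huA, hTA,
      card_filter_equiv wA (fun t => (i - 1) ≤ (t : ℕ)),
      card_filter_ge_nat _ (i - 1) (by omega), hcard]
  have hAnn : 0 ≤ eigAsc A (i - 1) := by
    have h1 := hwA ⟨i - 1, hi0lt⟩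
    rw [show ((⟨i - 1, hi0lt⟩ : Fin (Fintype.card (Fin N × Fin nt))) : ℕ) = i - 1 from rfl] at h1
    rw [h1]
    exact hA.eigenvalues_nonneg _
  have hVbound : ∀ x ∈ V, eigAsc A (i - 1) * Complex.re (star x ⬝ᵥ x)
      ≤ Complex.re (star x ⬝ᵥ (A *ᵥ x)) := by
    intro x hx
    refine quad_ge_of_mem huA hPA TA hx fun j hj => ?_
    have hjk : (i - 1) ≤ ((wA.symm j : Fin (Fintype.card (Fin N × Fin nt))) : ℕ) := by
      rw [hTA] at hj
      simpa using hj
    have h1 := hwA ⟨i - 1, hi0lt⟩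
    rw [show ((⟨i - 1, hi0lt⟩ : Fin (Fintype.card (Fin N × Fin nt))) : ℕ) = i - 1 from rfl] at h1
    rw [h1]
    have h2 : hA.1.eigenvalues j = (hA.1.eigenvalues ∘ wA) (wA.symm j) := by simp
    rw [h2]
    exact hmA (by rw [Fin.le_def]; exact hjk)
  -- B-side subspace U
  set uB : (Fin N × Fin nt) → (Fin N × Fin nt) → ℂ :=
    fun j => ⇑(hBH.eigenvectorBasis j) with huBdef
  have huB : ∀ a b, star (uB a) ⬝ᵥ uB b = if a = b then 1 else 0 := ortho_dot hBH
  set SB : Finset (Fin N × Fin nt) :=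
    Finset.univ.filter (fun j => hBH.eigenvalues j ≠ 0) with hSB
  set U := Submodule.span ℂ (uB '' ↑SB) with hU
  have hUrank : Module.finrank ℂ U = B.rank := by
    rw [hU, finrank_span_ortho huB, hSB, hBH.rank_eq_card_non_zero_eigs,
      Fintype.card_subtype]
  have hrankB : ρ * nt ≤ B.rank := by
    have h1 : ρ ≤ q.rank := by
      rw [← hρ, ← hqq]
      exact Matrix.rank_mul_le_left q q
    calc ρ * nt ≤ q.rank * nt := Nat.mul_le_mul_right nt h1
      _ ≤ B.rank := rank_kronecker_one_ge q
  have hPB2 : ∀ j, (B * B) *ᵥ uB j = (((hBH.eigenvalues j) ^ 2 : ℝ) : ℂ) • uB j := by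
    intro j
    rw [← Matrix.mulVec_mulVec, huBdef, hBH.mulVec_eigenvectorBasis, Matrix.mulVec_smul,
      hBH.mulVec_eigenvectorBasis, smul_smul]
    funext a
    simp [Complex.real_smul, pow_two]
  have hUbound : ∀ x ∈ U, σsq * Complex.re (star x ⬝ᵥ x)
      ≤ Complex.re (star x ⬝ᵥ ((B * B) *ᵥ x)) := by
    intro x hx
    refine quad_ge_of_mem huB hPB2 SB hx fun j hj => ?_
    refine hμsq j ?_
    rw [hSB] at hj
    simpa using hj
  -- the subspace W
  set f : ((Fin N × Fin nt) → ℂ) →ₗ[ℂ] ((Fin N × Fin nt) → ℂ) := Matrix.mulVecLin B with hf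
  set φ : U →ₗ[ℂ] (((Fin N × Fin nt) → ℂ) ⧸ V) := V.mkQ ∘ₗ (f ∘ₗ U.subtype) with hφ
  set W := Submodule.map U.subtype (LinearMap.ker φ) with hW
  have hWmem : ∀ x ∈ W, x ∈ U ∧ B *ᵥ x ∈ V := by
    intro x hx
    obtain ⟨y, hy, rfl⟩ := hx
    refine ⟨y.2, ?_⟩
    have h1 : φ y = 0 := hy
    rw [hφ] at h1
    simp only [LinearMap.comp_apply, Submodule.mkQ_apply, Submodule.Quotient.mk_eq_zero] at h1
    simpa [hf, Matrix.mulVecLin_apply] using h1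
  have hWrank : ρ * nt - (i - 1) ≤ Module.finrank ℂ W := by
    have e := Submodule.equivMapOfInjective U.subtype (Submodule.injective_subtype U)
      (LinearMap.ker φ)
    have h1 : Module.finrank ℂ W = Module.finrank ℂ (LinearMap.ker φ) :=
      (LinearEquiv.finrank_eq e).symm
    have h2 := LinearMap.finrank_range_add_finrank_ker φ
    have h3 : Module.finrank ℂ (LinearMap.range φ)
        ≤ Module.finrank ℂ (((Fin N × Fin nt) → ℂ) ⧸ V) := Submodule.finrank_le _
    have h4 := Submodule.finrank_quotient_add_finrank V
    have h5 : Module.finrank ℂ ((Fin N × Fin nt) → ℂ) = N * nt := by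
      rw [Module.finrank_pi, hcard]
    rw [h5, hVrank] at h4
    rw [hUrank] at h2
    omega
  -- the quadratic bound on W
  have hfinal : ∀ x ∈ W, (σsq * eigAsc A (i - 1)) * Complex.re (star x ⬝ᵥ x)
      ≤ Complex.re (star x ⬝ᵥ ((B * A * B) *ᵥ x)) := by
    intro x hx
    obtain ⟨hxU, hxBV⟩ := hWmem x hx
    have h1 : star x ⬝ᵥ ((B * A * B) *ᵥ x) = star (B *ᵥ x) ⬝ᵥ (A *ᵥ (B *ᵥ x)) := by
      rw [Matrix.star_mulVec, hBH.eq]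
      rw [← Matrix.mulVec_mulVec, ← Matrix.mulVec_mulVec]
      rw [Matrix.dotProduct_mulVec (star x) B]
    have h4 : star x ⬝ᵥ ((B * B) *ᵥ x) = star (B *ᵥ x) ⬝ᵥ (B *ᵥ x) := by
      rw [Matrix.star_mulVec, hBH.eq, ← Matrix.mulVec_mulVec]
      rw [Matrix.dotProduct_mulVec (star x) B]
    have h2 := hVbound (B *ᵥ x) hxBV
    have h3 := hUbound x hxU
    rw [h4] at h3
    rw [h1]
    calc (σsq * eigAsc A (i - 1)) * Complex.re (star x ⬝ᵥ x)
        = eigAsc A (i - 1) * (σsq * Complex.re (star x ⬝ᵥ x)) := by ring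
      _ ≤ eigAsc A (i - 1) * Complex.re (star (B *ᵥ x) ⬝ᵥ (B *ᵥ x)) :=
          mul_le_mul_of_nonneg_left h3 hAnn
      _ ≤ Complex.re (star (B *ᵥ x) ⬝ᵥ (A *ᵥ (B *ᵥ x))) := h2
  -- conclude
  have hk0lt : (N * nt - ρ * nt + i - 1) < Fintype.card (Fin N × Fin nt) := by
    rw [hcard]
    have : ρ * nt ≤ N * nt := Nat.mul_le_mul_right nt hρN
    omega
  have hWge : Fintype.card (Fin N × Fin nt) - (N * nt - ρ * nt + i - 1)
      ≤ Module.finrank ℂ W := by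
    rw [hcard]
    have h1 : ρ * nt ≤ N * nt := Nat.mul_le_mul_right nt hρN
    have h2 : 1 ≤ ρ * nt := Nat.one_le_iff_ne_zero.mpr (Nat.mul_ne_zero (by omega) (by omega))
    omega
  exact eigAsc_ge hΘH (N * nt - ρ * nt + i - 1) hk0lt W hWge _ hfinal
end
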